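/- arXiv:1611.08466 — 4 statements merged into one kernel-verified Lean document; each statement's English description precedes it below -/
import Mathlib

section
/- Let R be a noetherian commutative ring, M a finitely generated R-module, and a = (a_1, …, a_r) ∈ R^r a sequence of elements of R. For n ≥ 1 write a(n) = (a_1^n, …, a_r^n). Then for every i > 0 the pro-system of Koszul homology groups n ↦ H_i(M; a(n)) is pro-zero: for every n ≥ 1 there exists m ≥ n such that the transition map H_i(M; a(m)) → H_i(M; a(n)) is the zero map. -/
/-!
STATEMENT 1: Let `R` be a noetherian commutative ring, `M` a finitely generated
`R`-module, and `a = (a_1, …, a_r) ∈ R^r`.  For `n ≥ 1` write `a(n) = (a_1^n, …, a_r^n)`.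
Then for every `i > 0` the pro-system `n ↦ H_i(M; a(n))` of Koszul homology groups is
pro-zero: for every `n ≥ 1` there is an `m ≥ n` such that the transition map
`H_i(M; a(m)) → H_i(M; a(n))` is zero.

We realize the degree-`i` part of the Koszul complex of a sequence `b : Fin r → R` with
coefficients in `M` as `{s : Finset (Fin r) // s.card = i} → M` (the component at `s`
being the coefficient of `e_{j_1} ∧ ⋯ ∧ e_{j_i}` for `s = {j_1 < ⋯ < j_i}`), with the
usual differential `koszulD` given on basis elements by
`d(e_{j_1} ∧ ⋯ ∧ e_{j_i} ⊗ x) = ∑_k (-1)^k a_{j_k} • e_{j_1} ∧ ⋯ ∧ ê_{j_k} ∧ ⋯ ⊗ x`.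
For `m ≥ n` the transition chain map from the Koszul complex of `a(m)` to that of `a(n)`
is, in degree `i`, multiplication by `∏_{j ∈ s} a_j^{m−n}` on the component at `s`
(it is induced by multiplication by `a_j^{m−n}` on the `j`-th degree-one generator).

The statement below says exactly that for every `n ≥ 1` there is an `m ≥ n` such that the
transition map sends every `i`-cycle of the Koszul complex of `a(m)` to an `i`-boundary of
the Koszul complex of `a(n)`, for every degree `i = i₀ + 1 > 0`; this is precisely the
vanishing of the induced map `H_i(M; a(m)) → H_i(M; a(n))`.
-/

/-- The Koszul differential from degree `i + 1` to degree `i` for the sequence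
`b : Fin r → R` with coefficients in `M`. -/
noncomputable def koszulD (R : Type*) [CommRing R] (M : Type*) [AddCommGroup M] [Module R M]
    {r : ℕ} (b : Fin r → R) (i : ℕ)
    (x : {s : Finset (Fin r) // s.card = i + 1} → M) :
    {s : Finset (Fin r) // s.card = i} → M :=
  fun s => ∑ j : Fin r,
    if h : j ∈ s.1 then 0
    else ((-1 : ℤ) ^ (s.1.filter (fun k => k < j)).card) •
      b j • x ⟨insert j s.1, by rw [Finset.card_insert_of_notMem h, s.2]⟩

/-- The degree-`i` component of the transition chain map from the Koszul complex of
`(a_1^{n+e}, …, a_r^{n+e})` to that of `(a_1^n, …, a_r^n)`: on the component indexed by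
`s` it is multiplication by `∏_{j ∈ s} a_j^e`. -/
noncomputable def koszulTransition (R : Type*) [CommRing R] (M : Type*) [AddCommGroup M]
    [Module R M] {r : ℕ} (a : Fin r → R) (e : ℕ) (i : ℕ)
    (x : {s : Finset (Fin r) // s.card = i} → M) :
    {s : Finset (Fin r) // s.card = i} → M :=
  fun s => (∏ j ∈ s.1, a j ^ e) • x s

namespace S1
set_option linter.unusedSectionVars false
variable {R : Type*} [CommRing R] {M : Type*} [AddCommGroup M] [Module R M] {r : ℕ}

/-- embedding Fin r ↪ Fin (r+1) -/
def emb (r : ℕ) : Fin r ↪ Fin (r + 1) := ⟨Fin.castSucc, Fin.castSucc_injective r⟩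

lemma emb_apply (j : Fin r) : emb r j = j.castSucc := rfl

lemma last_not_mem_map (t : Finset (Fin r)) : Fin.last r ∉ t.map (emb r) := by
  simp only [Finset.mem_map, emb_apply, not_exists]
  rintro j ⟨hj, h⟩
  exact absurd h (Fin.castSucc_lt_last j).ne

lemma mem_map_emb {t : Finset (Fin r)} {j : Fin r} : j.castSucc ∈ t.map (emb r) ↔ j ∈ t :=
  Finset.mem_map' (emb r)

noncomputable def down (s : Finset (Fin (r + 1))) : Finset (Fin r) :=
  s.preimage Fin.castSucc ((Fin.castSucc_injective r).injOn)

lemma mem_down {s : Finset (Fin (r + 1))} {j : Fin r} : j ∈ down s ↔ j.castSucc ∈ s :=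
  Finset.mem_preimage

lemma down_map (t : Finset (Fin r)) : down (t.map (emb r)) = t := by
  ext j; rw [mem_down, mem_map_emb]

lemma map_down {s : Finset (Fin (r + 1))} (h : Fin.last r ∉ s) :
    (down s).map (emb r) = s := by
  ext k
  constructor
  · rintro hk
    obtain ⟨j, hj, rfl⟩ := Finset.mem_map.mp hk
    exact mem_down.mp hj
  · intro hk
    induction k using Fin.lastCases with
    | last => exact absurd hk h
    | cast j => exact Finset.mem_map.mpr ⟨j, mem_down.mpr hk, rfl⟩

lemma card_down {s : Finset (Fin (r + 1))} (h : Fin.last r ∉ s) :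
    (down s).card = s.card := by
  conv_rhs => rw [← map_down h]
  rw [Finset.card_map]

/-- restriction to subsets not containing `last` -/
noncomputable def res0 {i : ℕ} (x : {s : Finset (Fin (r + 1)) // s.card = i} → M) :
    {t : Finset (Fin r) // t.card = i} → M :=
  fun t => x ⟨t.1.map (emb r), by rw [Finset.card_map, t.2]⟩

/-- restriction to subsets containing `last` -/
noncomputable def res1 {i : ℕ} (x : {s : Finset (Fin (r + 1)) // s.card = i + 1} → M) :
    {t : Finset (Fin r) // t.card = i} → M :=
  fun t => x ⟨insert (Fin.last r) (t.1.map (emb r)), by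
    rw [Finset.card_insert_of_notMem (last_not_mem_map t.1), Finset.card_map, t.2]⟩

noncomputable def glue {i : ℕ} (u : {t : Finset (Fin r) // t.card = i + 1} → M)
    (v : {t : Finset (Fin r) // t.card = i} → M) :
    {s : Finset (Fin (r + 1)) // s.card = i + 1} → M :=
  fun s =>
    if h : Fin.last r ∈ s.1 then
      v ⟨down (s.1.erase (Fin.last r)), by
        rw [card_down (Finset.notMem_erase _ _), Finset.card_erase_of_mem h, s.2]; rfl⟩
    else u ⟨down s.1, by rw [card_down h, s.2]⟩

lemma res0_glue {i : ℕ} (u : {t : Finset (Fin r) // t.card = i + 1} → M)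
    (v : {t : Finset (Fin r) // t.card = i} → M) : res0 (glue u v) = u := by
  funext t
  have h : Fin.last r ∉ t.1.map (emb r) := last_not_mem_map t.1
  simp only [res0, glue, dif_neg h]
  exact congrArg u (Subtype.ext (down_map t.1))

lemma res1_glue {i : ℕ} (u : {t : Finset (Fin r) // t.card = i + 1} → M)
    (v : {t : Finset (Fin r) // t.card = i} → M) : res1 (glue u v) = v := by
  funext t
  have h : Fin.last r ∈ insert (Fin.last r) (t.1.map (emb r)) := Finset.mem_insert_self _ _
  simp only [res1, glue, dif_pos h]
  refine congrArg v (Subtype.ext ?_)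
  show down ((insert (Fin.last r) (t.1.map (emb r))).erase (Fin.last r)) = t.1
  rw [Finset.erase_insert (last_not_mem_map t.1), down_map]

lemma ext_res {i : ℕ} {x y : {s : Finset (Fin (r + 1)) // s.card = i + 1} → M}
    (h0 : res0 x = res0 y) (h1 : res1 (i := i) x = res1 y) : x = y := by
  funext s
  by_cases h : Fin.last r ∈ s.1
  · have hcard : (down (s.1.erase (Fin.last r))).card = i := by
      rw [card_down (Finset.notMem_erase _ _), Finset.card_erase_of_mem h, s.2]; rfl
    have hs : (⟨insert (Fin.last r) ((down (s.1.erase (Fin.last r))).map (emb r)), by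
        rw [Finset.card_insert_of_notMem (last_not_mem_map _), Finset.card_map, hcard]⟩ :
        {s : Finset (Fin (r + 1)) // s.card = i + 1}) = s := by
      refine Subtype.ext ?_
      show insert (Fin.last r) ((down (s.1.erase (Fin.last r))).map (emb r)) = s.1
      rw [map_down (Finset.notMem_erase _ _), Finset.insert_erase h]
    have := congrFun h1 ⟨down (s.1.erase (Fin.last r)), hcard⟩
    simpa only [res1, hs] using this
  · have hcard : (down s.1).card = i + 1 := by rw [card_down h, s.2]
    have hs : (⟨(down s.1).map (emb r), by rw [Finset.card_map, hcard]⟩ :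
        {s : Finset (Fin (r + 1)) // s.card = i + 1}) = s := Subtype.ext (map_down h)
    have := congrFun h0 ⟨down s.1, hcard⟩
    simpa only [res0, hs] using this

section algebra

lemma koszulD_apply (b : Fin r → R) (i : ℕ) (x : {s : Finset (Fin r) // s.card = i + 1} → M)
    (s : {s : Finset (Fin r) // s.card = i}) :
    koszulD R M b i x s = ∑ j : Fin r,
      if h : j ∈ s.1 then 0
      else ((-1 : ℤ) ^ (s.1.filter (fun k => k < j)).card) •
        b j • x ⟨insert j s.1, by rw [Finset.card_insert_of_notMem h, s.2]⟩ := rfl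

lemma koszulD_add (b : Fin r → R) (i : ℕ) (x y : {s : Finset (Fin r) // s.card = i + 1} → M) :
    koszulD R M b i (x + y) = koszulD R M b i x + koszulD R M b i y := by
  funext s
  simp only [koszulD, Pi.add_apply, ← Finset.sum_add_distrib]
  refine Finset.sum_congr rfl fun j _ => ?_
  by_cases h : j ∈ s.1 <;> simp [h, smul_add]

lemma koszulD_smul (b : Fin r → R) (i : ℕ) (c : R)
    (x : {s : Finset (Fin r) // s.card = i + 1} → M) :
    koszulD R M b i (c • x) = c • koszulD R M b i x := by
  funext s
  simp only [koszulD, Pi.smul_apply, Finset.smul_sum]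
  refine Finset.sum_congr rfl fun j _ => ?_
  by_cases h : j ∈ s.1
  · simp [h]
  · simp only [dif_neg h, Pi.smul_apply]
    rw [smul_comm (b j) c, smul_comm ((-1 : ℤ) ^ (s.1.filter (fun k => k < j)).card) c]

lemma koszulD_zsmul (b : Fin r → R) (i : ℕ) (c : ℤ)
    (x : {s : Finset (Fin r) // s.card = i + 1} → M) :
    koszulD R M b i (c • x) = c • koszulD R M b i x := by
  funext s
  simp only [koszulD, Pi.smul_apply, Finset.smul_sum]
  refine Finset.sum_congr rfl fun j _ => ?_
  by_cases h : j ∈ s.1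
  · simp [h]
  · simp only [dif_neg h, Pi.smul_apply]
    rw [smul_comm (b j) c, smul_comm ((-1 : ℤ) ^ (s.1.filter (fun k => k < j)).card) c]

lemma koszulD_sub (b : Fin r → R) (i : ℕ) (x y : {s : Finset (Fin r) // s.card = i + 1} → M) :
    koszulD R M b i (x - y) = koszulD R M b i x - koszulD R M b i y := by
  have := koszulD_add (M := M) b i (x - y) y
  rw [sub_add_cancel] at this
  rw [this]; abel

lemma trans_smul (a : Fin r → R) (e i : ℕ) (c : R)
    (x : {s : Finset (Fin r) // s.card = i} → M) :
    koszulTransition R M a e i (c • x) = c • koszulTransition R M a e i x := by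
  funext s; simp only [koszulTransition, Pi.smul_apply]; rw [smul_comm]

lemma trans_zsmul (a : Fin r → R) (e i : ℕ) (c : ℤ)
    (x : {s : Finset (Fin r) // s.card = i} → M) :
    koszulTransition R M a e i (c • x) = c • koszulTransition R M a e i x := by
  funext s; simp only [koszulTransition, Pi.smul_apply]; rw [smul_comm]

lemma trans_sub (a : Fin r → R) (e i : ℕ)
    (x y : {s : Finset (Fin r) // s.card = i} → M) :
    koszulTransition R M a e i (x - y)
      = koszulTransition R M a e i x - koszulTransition R M a e i y := by
  funext s; simp only [koszulTransition, Pi.sub_apply, smul_sub]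

lemma trans_comp (a : Fin r → R) (e f i : ℕ)
    (x : {s : Finset (Fin r) // s.card = i} → M) :
    koszulTransition R M a (e + f) i x
      = koszulTransition R M a e i (koszulTransition R M a f i x) := by
  funext s
  simp only [koszulTransition, smul_smul, ← Finset.prod_mul_distrib, pow_add]

lemma trans_deg0 (a : Fin r → R) (e : ℕ)
    (x : {s : Finset (Fin r) // s.card = 0} → M) :
    koszulTransition R M a e 0 x = x := by
  funext s
  have : s.1 = ∅ := Finset.card_eq_zero.mp s.2
  simp [koszulTransition, this]

lemma d_trans (a : Fin r → R) (n e i : ℕ)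
    (x : {s : Finset (Fin r) // s.card = i + 1} → M) :
    koszulD R M (fun j => a j ^ n) i (koszulTransition R M a e (i + 1) x)
      = koszulTransition R M a e i (koszulD R M (fun j => a j ^ (n + e)) i x) := by
  funext s
  simp only [koszulD, koszulTransition, Finset.smul_sum]
  refine Finset.sum_congr rfl fun j _ => ?_
  by_cases h : j ∈ s.1
  · simp [h]
  · simp only [dif_neg h]
    rw [Finset.prod_insert h]
    simp only [← Int.cast_smul_eq_zsmul R, smul_smul]
    congr 1
    ring

end algebra

section cone

lemma filter_map_lt (t : Finset (Fin r)) (j : Fin r) :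
    ((t.map (emb r)).filter (fun k => k < j.castSucc)).card
      = (t.filter (fun k => k < j)).card := by
  rw [Finset.filter_map, Finset.card_map]
  congr 1

lemma filter_lt_last (t : Finset (Fin r)) :
    ((t.map (emb r)).filter (fun k => k < Fin.last r)) = t.map (emb r) := by
  refine Finset.filter_true_of_mem fun k hk => ?_
  obtain ⟨j, _, rfl⟩ := Finset.mem_map.mp hk
  exact Fin.castSucc_lt_last j

/-- L1 : the `res0`-component of the differential. -/
lemma res0_koszulD (b : Fin (r + 1) → R) (i : ℕ)
    (x : {s : Finset (Fin (r + 1)) // s.card = i + 1} → M) :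
    res0 (koszulD R M b i x)
      = koszulD R M (fun j => b j.castSucc) i (res0 x)
        + ((-1 : ℤ) ^ i) • b (Fin.last r) • res1 x := by
  funext t
  simp only [res0, koszulD_apply, Pi.add_apply, Pi.smul_apply]
  rw [Fin.sum_univ_castSucc]
  congr 1
  · refine Finset.sum_congr rfl fun j _ => ?_
    by_cases h : j ∈ t.1
    · rw [dif_pos (mem_map_emb.mpr h), dif_pos h]
    · rw [dif_neg (fun hc => h (mem_map_emb.mp hc)), dif_neg h, filter_map_lt]
      congr 1
      have : (⟨insert j.castSucc (t.1.map (emb r)), by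
          rw [Finset.card_insert_of_notMem (fun hc => h (mem_map_emb.mp hc)),
            Finset.card_map, t.2]⟩ : {s : Finset (Fin (r + 1)) // s.card = i + 1})
          = ⟨(insert j t.1).map (emb r), by
          rw [Finset.card_map, Finset.card_insert_of_notMem h, t.2]⟩ := by
        refine Subtype.ext ?_
        show insert j.castSucc (t.1.map (emb r)) = (insert j t.1).map (emb r)
        rw [Finset.map_insert, emb_apply]
      rw [this]
  · rw [dif_neg (last_not_mem_map t.1), filter_lt_last]
    congr 1
    rw [Finset.card_map, t.2]

/-- L2 : the `res1`-component of the differential. -/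
lemma res1_koszulD (b : Fin (r + 1) → R) (i : ℕ)
    (x : {s : Finset (Fin (r + 1)) // s.card = i + 2} → M) :
    res1 (koszulD R M b (i + 1) x)
      = koszulD R M (fun j => b j.castSucc) i (res1 x) := by
  funext t
  simp only [res1, koszulD_apply]
  rw [Fin.sum_univ_castSucc, dif_pos (Finset.mem_insert_self _ _), add_zero]
  refine Finset.sum_congr rfl fun j _ => ?_
  have hmem : j.castSucc ∈ insert (Fin.last r) (t.1.map (emb r)) ↔ j ∈ t.1 := by
    rw [Finset.mem_insert, mem_map_emb]
    simp [(Fin.castSucc_lt_last j).ne]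
  by_cases h : j ∈ t.1
  · rw [dif_pos (hmem.mpr h), dif_pos h]
  · rw [dif_neg (fun hc => h (hmem.mp hc)), dif_neg h]
    have hfil : ((insert (Fin.last r) (t.1.map (emb r))).filter
        (fun k => k < j.castSucc)).card = (t.1.filter (fun k => k < j)).card := by
      rw [Finset.filter_insert, if_neg (not_lt.mpr (Fin.castSucc_lt_last j).le), filter_map_lt]
    rw [hfil]
    congr 1
    have : (⟨insert j.castSucc (insert (Fin.last r) (t.1.map (emb r))), by
        rw [Finset.card_insert_of_notMem (fun hc => h (hmem.mp hc)),
          Finset.card_insert_of_notMem (last_not_mem_map t.1), Finset.card_map, t.2]⟩ :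
        {s : Finset (Fin (r + 1)) // s.card = i + 2})
        = ⟨insert (Fin.last r) ((insert j t.1).map (emb r)), by
        rw [Finset.card_insert_of_notMem (last_not_mem_map _), Finset.card_map,
          Finset.card_insert_of_notMem h, t.2]⟩ := by
      refine Subtype.ext ?_
      show insert j.castSucc (insert (Fin.last r) (t.1.map (emb r)))
        = insert (Fin.last r) ((insert j t.1).map (emb r))
      rw [Finset.map_insert, emb_apply, Finset.insert_comm]
    rw [this]

lemma res0_trans (a : Fin (r + 1) → R) (e i : ℕ)
    (x : {s : Finset (Fin (r + 1)) // s.card = i} → M) :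
    res0 (koszulTransition R M a e i x)
      = koszulTransition R M (fun j => a j.castSucc) e i (res0 x) := by
  funext t
  simp only [res0, koszulTransition, Finset.prod_map, emb_apply]

lemma res1_trans (a : Fin (r + 1) → R) (e i : ℕ)
    (x : {s : Finset (Fin (r + 1)) // s.card = i + 1} → M) :
    res1 (koszulTransition R M a e (i + 1) x)
      = (a (Fin.last r)) ^ e •
          koszulTransition R M (fun j => a j.castSucc) e i (res1 x) := by
  funext t
  simp only [res1, koszulTransition, Pi.smul_apply,
    Finset.prod_insert (last_not_mem_map t.1), Finset.prod_map, emb_apply, mul_smul]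

end cone

section main

lemma res0_zero {i : ℕ} : res0 (0 : {s : Finset (Fin (r + 1)) // s.card = i} → M)
    = (0 : {t : Finset (Fin r) // t.card = i} → M) := rfl

lemma res1_zero {i : ℕ} : res1 (0 : {s : Finset (Fin (r + 1)) // s.card = i + 1} → M)
    = (0 : {t : Finset (Fin r) // t.card = i} → M) := rfl

lemma deg0_eq (t : {s : Finset (Fin r) // s.card = 0}) : t = ⟨∅, Finset.card_empty⟩ :=
  Subtype.ext (Finset.card_eq_zero.mp t.2)

lemma koszulD_deg0 (b : Fin r → R) (x : {s : Finset (Fin r) // s.card = 0 + 1} → M) :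
    koszulD R M b 0 x ⟨∅, Finset.card_empty⟩
      = ∑ j : Fin r, b j • x ⟨{j}, Finset.card_singleton j⟩ := by
  rw [koszulD_apply]
  refine Finset.sum_congr rfl fun j _ => ?_
  rw [dif_neg (Finset.notMem_empty j)]
  simp only [Finset.filter_empty, Finset.card_empty, pow_zero, one_smul]
  exact congrArg (fun s => b j • x s) (Subtype.ext (by simp))

variable [IsNoetherianRing R] [Module.Finite R M]

lemma key : ∀ (r : ℕ) (a : Fin r → R) (i₀ n : ℕ), ∃ m, n ≤ m ∧
    ∀ x : {s : Finset (Fin r) // s.card = i₀ + 1} → M,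
      koszulD R M (fun j => a j ^ m) i₀ x = 0 →
      ∃ y : {s : Finset (Fin r) // s.card = i₀ + 2} → M,
        koszulD R M (fun j => a j ^ n) (i₀ + 1) y
          = koszulTransition R M a (m - n) (i₀ + 1) x := by
  intro r
  induction r with
  | zero =>
    intro a i₀ n
    refine ⟨n, le_rfl, fun x _ => ⟨0, ?_⟩⟩
    funext s
    have h1 : s.1.card ≤ 0 := by simpa using Finset.card_le_univ s.1
    rw [s.2] at h1
    omega
  | succ r IH =>
    intro a i₀ n
    obtain ⟨n₁, hn₁, hA⟩ := IH (fun j => a j.castSucc) i₀ n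
    obtain ⟨m, hmn₁, hB⟩ : ∃ m, n₁ ≤ m ∧
        ∀ x : {s : Finset (Fin (r + 1)) // s.card = i₀ + 1} → M,
          koszulD R M (fun j => a j ^ m) i₀ x = 0 →
          ∃ z : {t : Finset (Fin r) // t.card = i₀ + 1} → M,
            koszulD R M (fun j => a j.castSucc ^ n₁) i₀ z
              = (a (Fin.last r)) ^ (m - n₁) •
                  koszulTransition R M (fun j => a j.castSucc) (m - n₁) i₀ (res1 x) := by
      cases i₀ with
      | succ k =>
        obtain ⟨m, hm, hIH⟩ := IH (fun j => a j.castSucc) k n₁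
        refine ⟨m, hm, fun x hx => ?_⟩
        have hcyc : koszulD R M (fun j => a j.castSucc ^ m) k (res1 x) = 0 := by
          have h := congrArg res1 hx
          rw [res1_koszulD, res1_zero] at h
          exact h
        obtain ⟨z', hz'⟩ := hIH (res1 x) hcyc
        refine ⟨(a (Fin.last r)) ^ (m - n₁) • z', ?_⟩
        rw [koszulD_smul, hz']
      | zero =>
        set D : (Fin r → M) →ₗ[R] M :=
          ∑ j : Fin r, (a j.castSucc ^ n₁) • (LinearMap.proj j : (Fin r → M) →ₗ[R] M)
          with hD
        have hDapp : ∀ f : Fin r → M, D f = ∑ j : Fin r, a j.castSucc ^ n₁ • f j := by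
          intro f
          simp [hD, LinearMap.sum_apply]
        have hmono : Monotone fun k =>
            (LinearMap.range D).comap (LinearMap.lsmul R M ((a (Fin.last r)) ^ k)) := by
          intro k l hkl v hv
          simp only [Submodule.mem_comap, LinearMap.lsmul_apply] at hv ⊢
          have h : (a (Fin.last r)) ^ l • v
              = (a (Fin.last r)) ^ (l - k) • (a (Fin.last r)) ^ k • v := by
            rw [smul_smul, ← pow_add, Nat.sub_add_cancel hkl]
          rw [h]
          exact Submodule.smul_mem _ _ hv
        obtain ⟨c, hc⟩ := monotone_stabilizes_iff_noetherian.mpr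
          (inferInstance : IsNoetherian R M)
          ⟨fun k => (LinearMap.range D).comap (LinearMap.lsmul R M ((a (Fin.last r)) ^ k)),
            hmono⟩
        refine ⟨n₁ + c, Nat.le_add_right _ _, fun x hx => ?_⟩
        have h0eq := res0_koszulD (M := M) (fun j => a j ^ (n₁ + c)) 0 x
        rw [hx, res0_zero] at h0eq
        have hsum : (∑ j : Fin r,
              a j.castSucc ^ (n₁ + c) • res0 x ⟨{j}, Finset.card_singleton j⟩)
            + (a (Fin.last r)) ^ (n₁ + c) • res1 x ⟨∅, Finset.card_empty⟩ = 0 := by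
          have h := congrFun h0eq.symm ⟨∅, Finset.card_empty⟩
          rw [Pi.add_apply, koszulD_deg0] at h
          simpa using h
        have hgw : (a (Fin.last r)) ^ (n₁ + c) • res1 x ⟨∅, Finset.card_empty⟩
            ∈ LinearMap.range D := by
          have heq : (a (Fin.last r)) ^ (n₁ + c) • res1 x ⟨∅, Finset.card_empty⟩
              = D (fun j => -(a j.castSucc ^ c • res0 x ⟨{j}, Finset.card_singleton j⟩)) := by
            rw [hDapp]
            simp only [smul_neg, smul_smul, ← pow_add, Finset.sum_neg_distrib]
            exact eq_neg_of_add_eq_zero_right hsum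
          exact heq ▸ LinearMap.mem_range_self D _
        have hwc : (a (Fin.last r)) ^ c • res1 x ⟨∅, Finset.card_empty⟩
            ∈ LinearMap.range D := by
          have h1 : res1 x ⟨∅, Finset.card_empty⟩ ∈
              (LinearMap.range D).comap (LinearMap.lsmul R M ((a (Fin.last r)) ^ (n₁ + c))) := by
            simpa [Submodule.mem_comap] using hgw
          have h2 := hc (n₁ + c) (Nat.le_add_left c n₁)
          simp only [OrderHom.coe_mk] at h2
          have h3 : res1 x ⟨∅, Finset.card_empty⟩ ∈
              (LinearMap.range D).comap (LinearMap.lsmul R M ((a (Fin.last r)) ^ c)) := by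
            rw [h2]
            exact h1
          simpa [Submodule.mem_comap] using h3
        obtain ⟨f, hf⟩ := hwc
        refine ⟨fun t => ∑ j ∈ t.1, f j, ?_⟩
        rw [Nat.add_sub_cancel_left, trans_deg0]
        funext t
        rw [deg0_eq t, koszulD_deg0]
        simp only [Finset.sum_singleton, Pi.smul_apply]
        rw [← hDapp, hf]
    -- the main chase
    refine ⟨m, le_trans hn₁ hmn₁, fun x hx => ?_⟩
    have hm1 : n₁ + (m - n₁) = m := by omega
    have hn2 : n + (n₁ - n) = n₁ := by omega
    have hmn : m - n = (n₁ - n) + (m - n₁) := by omega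
    obtain ⟨z, hz⟩ := hB x hx
    have h0 : koszulD R M (fun j => a j.castSucc ^ m) i₀ (res0 x)
        = ((-1 : ℤ) ^ (i₀ + 1)) • (a (Fin.last r)) ^ m • res1 x := by
      have h := res0_koszulD (M := M) (fun j => a j ^ m) i₀ x
      rw [hx, res0_zero] at h
      have h' := eq_neg_of_add_eq_zero_left h.symm
      have hpow : ((-1 : ℤ) ^ (i₀ + 1)) = -((-1 : ℤ) ^ i₀) := by ring
      rw [hpow, neg_smul]
      exact h'
    have hdTx : koszulD R M (fun j => a j.castSucc ^ n₁) i₀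
        (koszulTransition R M (fun j => a j.castSucc) (m - n₁) (i₀ + 1) (res0 x))
        = ((-1 : ℤ) ^ (i₀ + 1)) • (a (Fin.last r)) ^ m •
            koszulTransition R M (fun j => a j.castSucc) (m - n₁) i₀ (res1 x) := by
      rw [d_trans]
      rw [hm1, h0, trans_zsmul, trans_smul]
    have hdz : koszulD R M (fun j => a j.castSucc ^ n₁) i₀
        (((-1 : ℤ) ^ (i₀ + 1)) • (a (Fin.last r)) ^ n₁ • z)
        = ((-1 : ℤ) ^ (i₀ + 1)) • (a (Fin.last r)) ^ m •
            koszulTransition R M (fun j => a j.castSucc) (m - n₁) i₀ (res1 x) := by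
      rw [koszulD_zsmul, koszulD_smul, hz, smul_smul, ← pow_add, hm1]
    have hu : koszulD R M (fun j => a j.castSucc ^ n₁) i₀
        (koszulTransition R M (fun j => a j.castSucc) (m - n₁) (i₀ + 1) (res0 x)
          - ((-1 : ℤ) ^ (i₀ + 1)) • (a (Fin.last r)) ^ n₁ • z) = 0 := by
      rw [koszulD_sub, hdTx, hdz, sub_self]
    obtain ⟨y₀, hy₀⟩ := hA _ hu
    refine ⟨glue y₀ ((a (Fin.last r)) ^ (n₁ - n) •
      koszulTransition R M (fun j => a j.castSucc) (n₁ - n) (i₀ + 1) z), ?_⟩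
    refine ext_res (i := i₀) ?_ ?_
    · rw [res0_koszulD, res0_glue, res1_glue, res0_trans, hy₀, trans_sub, trans_zsmul,
        trans_smul]
      rw [show koszulTransition R M (fun j => a j.castSucc) (n₁ - n) (i₀ + 1)
            (koszulTransition R M (fun j => a j.castSucc) (m - n₁) (i₀ + 1) (res0 x))
          = koszulTransition R M (fun j => a j.castSucc) (m - n) (i₀ + 1) (res0 x) from by
        rw [hmn, trans_comp]]
      rw [show ((-1 : ℤ) ^ (i₀ + 1)) • (fun j => a j ^ n) (Fin.last r) •
            ((a (Fin.last r)) ^ (n₁ - n) •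
              koszulTransition R M (fun j => a j.castSucc) (n₁ - n) (i₀ + 1) z)
          = ((-1 : ℤ) ^ (i₀ + 1)) • (a (Fin.last r)) ^ n₁ •
              koszulTransition R M (fun j => a j.castSucc) (n₁ - n) (i₀ + 1) z from by
        rw [smul_smul (a (Fin.last r) ^ n), ← pow_add, hn2]]
      abel
    · rw [res1_koszulD, res1_glue, res1_trans, koszulD_smul, d_trans]
      rw [hn2, hz, trans_smul]
      rw [show koszulTransition R M (fun j => a j.castSucc) (n₁ - n) i₀
            (koszulTransition R M (fun j => a j.castSucc) (m - n₁) i₀ (res1 x))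
          = koszulTransition R M (fun j => a j.castSucc) (m - n) i₀ (res1 x) from by
        rw [hmn, trans_comp]]
      rw [smul_smul, ← pow_add, show (n₁ - n) + (m - n₁) = m - n from by omega]

end main

end S1

theorem statement1 (R : Type*) [CommRing R] [IsNoetherianRing R]
    (M : Type*) [AddCommGroup M] [Module R M] [Module.Finite R M]
    (r : ℕ) (a : Fin r → R) (i₀ : ℕ) (n : ℕ) (hn : 1 ≤ n) :
    ∃ m : ℕ, n ≤ m ∧
      ∀ x : {s : Finset (Fin r) // s.card = i₀ + 1} → M,
        koszulD R M (fun j => a j ^ m) i₀ x = 0 →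
        ∃ y : {s : Finset (Fin r) // s.card = i₀ + 2} → M,
          koszulD R M (fun j => a j ^ n) (i₀ + 1) y =
            koszulTransition R M a (m - n) (i₀ + 1) x := by
  exact S1.key r a i₀ n
end

section
/- Let A be a noetherian commutative ring, let φ : A → B be a homomorphism of commutative rings which makes B into a finitely generated A-module, and let I ⊆ A be an ideal such that for every f ∈ I the induced map on localizations A_f → B_f is an isomorphism. Then there exists an integer N > 0 such that φ(I^N)·B ⊆ φ(A) (the ideal of B generated by the image of I^N is contained in the image of φ) and I^N ∩ ker(φ) = 0. -/
/-!
STATEMENT 3: Let `A` be a noetherian commutative ring, `φ : A → B` a homomorphism of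
commutative rings making `B` a finitely generated `A`-module (we encode `φ` as the
structure map `algebraMap A B` of an `A`-algebra structure on `B`), and let `I ⊆ A` be an
ideal such that for every `f ∈ I` the induced map on localizations `A_f → B_f` is an
isomorphism.  Then there exists `N > 0` such that the ideal of `B` generated by
`φ(I^N)` is contained in the image of `φ`, and `I^N ∩ ker(φ) = 0`.
-/

lemma uniform_pow {A M : Type*} [CommRing A] [AddCommGroup M] [Module A M]
    {P R : Submodule A M} (hP : P.FG) (f : A)
    (h : ∀ b ∈ P, ∃ n : ℕ, f ^ n • b ∈ R) : ∃ n : ℕ, ∀ b ∈ P, f ^ n • b ∈ R := by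
  classical
  obtain ⟨s, hs⟩ := hP
  have h' : ∀ b : M, ∃ n : ℕ, b ∈ P → f ^ n • b ∈ R := by
    intro b
    by_cases hb : b ∈ P
    · obtain ⟨n, hn⟩ := h b hb; exact ⟨n, fun _ => hn⟩
    · exact ⟨0, fun hb' => absurd hb' hb⟩
  choose n hn using h'
  refine ⟨s.sup n, ?_⟩
  have hle : P ≤ Submodule.comap ((LinearMap.lsmul A M) (f ^ s.sup n)) R := by
    rw [← hs, Submodule.span_le]
    intro b hb
    have hbP : b ∈ P := hs ▸ Submodule.subset_span hb
    have h1 := hn b hbP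
    have h2 : n b ≤ s.sup n := Finset.le_sup hb
    simp only [Set.mem_setOf_eq, SetLike.mem_coe, Submodule.mem_comap, LinearMap.lsmul_apply]
    rw [← Nat.sub_add_cancel h2, pow_add, mul_smul]
    exact R.smul_mem _ h1
  exact fun b hb => hle hb

theorem statement3 (A B : Type*) [CommRing A] [IsNoetherianRing A] [CommRing B]
    [Algebra A B] [Module.Finite A B] (I : Ideal A)
    (hloc : ∀ f ∈ I, Function.Bijective (Localization.awayMap (algebraMap A B) f)) :
    ∃ N : ℕ, 0 < N ∧
      (↑(Ideal.map (algebraMap A B) (I ^ N)) : Set B) ⊆ Set.range (algebraMap A B) ∧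
      I ^ N ⊓ RingHom.ker (algebraMap A B) = ⊥ := by
  classical
  set K : Ideal A := RingHom.ker (algebraMap A B) with hK
  set R : Submodule A B := LinearMap.range (Algebra.linearMap A B) with hR
  -- commuting square
  have hsquare : ∀ f : A, ∀ x : A,
      Localization.awayMap (algebraMap A B) f (algebraMap A (Localization.Away f) x)
        = algebraMap B (Localization.Away (algebraMap A B f)) (algebraMap A B x) := by
    intro f x
    erw [IsLocalization.map_eq]
  -- cokernel killed by powers
  have hcoker : ∀ f ∈ I, ∃ n : ℕ, ∀ b : B, f ^ n • b ∈ R := by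
    intro f hf
    have key : ∀ b : B, ∃ n : ℕ, f ^ n • b ∈ R := by
      intro b
      obtain ⟨z, hz⟩ := (hloc f hf).2 (algebraMap B (Localization.Away (algebraMap A B f)) b)
      obtain ⟨⟨a, s⟩, hzs⟩ := IsLocalization.surj (Submonoid.powers f) z
      obtain ⟨k, hk⟩ := s.2
      have hmap := congrArg (Localization.awayMap (algebraMap A B) f) hzs
      rw [map_mul, hz, hsquare, hsquare] at hmap
      -- hmap : algebraMap b * algebraMap (φ s) = algebraMap (φ a)
      have h0 : algebraMap B (Localization.Away (algebraMap A B f))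
          (b * algebraMap A B (s : A) - algebraMap A B a) = 0 := by
        rw [map_sub, map_mul, hmap, sub_self]
      obtain ⟨⟨c, m, hc⟩, hm⟩ :=
        (IsLocalization.map_eq_zero_iff (Submonoid.powers (algebraMap A B f)) _ _).mp h0
      refine ⟨m + k, ?_⟩
      have : f ^ (m + k) • b = algebraMap A B (f ^ m * a) := by
        rw [Algebra.smul_def, map_mul, map_pow]
        have := hm
        dsimp only at this
        rw [← hc] at this
        rw [mul_sub] at this
        have h2 : algebraMap A B f ^ m * (b * algebraMap A B (s : A))
            = algebraMap A B f ^ m * algebraMap A B a := sub_eq_zero.mp this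
        calc algebraMap A B f ^ (m + k) * b
            = algebraMap A B f ^ m * (b * algebraMap A B (s : A)) := by
              rw [← hk, map_pow, pow_add]; ring
          _ = algebraMap A B f ^ m * algebraMap A B a := h2
          _ = algebraMap A B (f ^ m) * algebraMap A B a := by rw [map_pow]
      rw [this]
      exact ⟨f ^ m * a, rfl⟩
    obtain ⟨n, hn⟩ := uniform_pow (Module.Finite.fg_top (R := A) (M := B)) f
      (fun b _ => key b)
    exact ⟨n, fun b => hn b trivial⟩
  -- kernel killed by powers
  have hker : ∀ f ∈ I, ∃ n : ℕ, ∀ x ∈ K, f ^ n * x = 0 := by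
    intro f hf
    have key : ∀ x ∈ K, ∃ n : ℕ, f ^ n • x ∈ (⊥ : Submodule A A) := by
      intro x hx
      have h0 : algebraMap A (Localization.Away f) x = 0 := by
        apply (hloc f hf).1
        rw [map_zero, hsquare]
        rw [show algebraMap A B x = 0 from hx, map_zero]
      obtain ⟨⟨c, m, hc⟩, hm⟩ :=
        (IsLocalization.map_eq_zero_iff (Submonoid.powers f) _ _).mp h0
      refine ⟨m, ?_⟩
      dsimp only at hm
      rw [← hc] at hm
      simpa [smul_eq_mul] using hm
    obtain ⟨n, hn⟩ := uniform_pow (IsNoetherian.noetherian K) f key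
    exact ⟨n, fun x hx => by simpa [smul_eq_mul] using hn x hx⟩
  -- the ideal J
  set J : Ideal A := Submodule.colon R ⊤ ⊓ Submodule.annihilator K with hJ
  have hIJ : I ≤ J.radical := by
    intro f hf
    obtain ⟨n1, h1⟩ := hcoker f hf
    obtain ⟨n2, h2⟩ := hker f hf
    refine Ideal.mem_radical_iff.mpr ⟨n1 + n2, Submodule.mem_inf.mpr ⟨?_, ?_⟩⟩
    · rw [Submodule.mem_colon]
      intro b _
      rw [pow_add, mul_comm, mul_smul]
      exact R.smul_mem _ (h1 b)
    · rw [Submodule.mem_annihilator]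
      intro x hx
      rw [smul_eq_mul, pow_add, mul_assoc, h2 x hx, mul_zero]
  obtain ⟨M, hM⟩ := Ideal.exists_pow_le_of_le_radical_of_fg hIJ (IsNoetherian.noetherian I)
  -- Artin-Rees
  obtain ⟨k, hAR⟩ := Ideal.exists_pow_inf_eq_pow_smul I (K : Submodule A A)
  refine ⟨M + k + 1, Nat.succ_pos _, ?_, ?_⟩
  · -- cokernel condition
    have hpow : I ^ (M + k + 1) ≤ J := le_trans (Ideal.pow_le_pow_right (by omega)) hM
    intro b hb
    have hb' : b ∈ (I ^ (M + k + 1)) • (⊤ : Submodule A B) := by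
      rw [Ideal.smul_top_eq_map]
      exact hb
    have hle : (I ^ (M + k + 1)) • (⊤ : Submodule A B) ≤ R := by
      apply Submodule.smul_le.mpr
      intro i hi m _
      have : i ∈ Submodule.colon R ⊤ := (hpow hi).1
      exact (Submodule.mem_colon.mp this) m trivial
    obtain ⟨a, ha⟩ := hle hb'
    exact ⟨a, ha⟩
  · -- kernel condition
    apply le_antisymm _ bot_le
    have htop : ∀ n : ℕ, (I ^ n • ⊤ : Submodule A A) = I ^ n := by
      intro n
      rw [Ideal.smul_top_eq_map]
      ext x
      simp [Ideal.map_id]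
    have h1 := hAR (M + k + 1) (by omega)
    rw [htop, htop] at h1
    rw [h1]
    have : M + k + 1 - k = M + 1 := by omega
    rw [this]
    apply Submodule.smul_le.mpr
    intro i hi x hx
    have hiJ : i ∈ J := hM (Ideal.pow_le_pow_right (by omega) hi)
    have := Submodule.mem_annihilator.mp hiJ.2 x hx.2
    simpa using this
end

section
/- Let A be a noetherian local commutative ring and let (a_0, …, a_r) be a regular sequence in A with r ≥ 1. Fix an index i with 0 ≤ i ≤ r. Then the sequence (a_i S_j − a_j)_{j ≠ i} (taken in the order j = 0, 1, …, r, omitting j = i) is a regular sequence in the polynomial ring A[S_0, …, Ŝ_i, …, S_r] in the r variables S_j, j ≠ i. -/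
/-!
STATEMENT 5: Let `A` be a noetherian local commutative ring and `(a_0, …, a_r)` a regular
sequence in `A` with `r ≥ 1`.  Fix `0 ≤ i ≤ r`.  Then the sequence `(a_i S_j − a_j)_{j ≠ i}`
(in the order `j = 0, 1, …, r`, omitting `j = i`) is a regular sequence in the polynomial
ring `A[S_0, …, Ŝ_i, …, S_r]`.
-/

/-- A list `xs = [x_1, …, x_n]` of elements of a commutative ring `R` is a regular
sequence if for each `k` the image of `x_{k+1}` in `R ⧸ (x_1, …, x_k)` is a
nonzerodivisor. -/
def IsRegularSequence {R : Type*} [CommRing R] (xs : List R) : Prop :=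
  ∀ (k : ℕ) (hk : k < xs.length)
    (y : R ⧸ Ideal.span {r | r ∈ xs.take k}),
    Ideal.Quotient.mk (Ideal.span {r | r ∈ xs.take k}) (xs.get ⟨k, hk⟩) * y = 0 → y = 0

namespace St5

variable {R S : Type*} [CommRing R] [CommRing S]

def NzdMod (I : Ideal R) (d : R) : Prop := ∀ g, d * g ∈ I → g ∈ I

lemma nzdMod_of_unitMod {I : Ideal R} {d v : R} (h : d * v - 1 ∈ I) : NzdMod I d := by
  intro g hg
  have : g - v * (d * g) ∈ I := by
    have : g - v * (d * g) = -(g * (d * v - 1)) := by ring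
    rw [this]; exact I.neg_mem (I.mul_mem_left _ h)
  have := I.add_mem this (I.mul_mem_left v hg)
  simpa using this

lemma nzdMod_quot_iff (I : Ideal R) (x : R) :
    (∀ y : R ⧸ I, Ideal.Quotient.mk I x * y = 0 → y = 0) ↔ NzdMod I x := by
  constructor
  · intro h z hz
    have := h (Ideal.Quotient.mk I z) (by
      rw [← map_mul, Ideal.Quotient.eq_zero_iff_mem]; exact hz)
    rwa [Ideal.Quotient.eq_zero_iff_mem] at this
  · intro h y hy
    obtain ⟨z, rfl⟩ := Ideal.Quotient.mk_surjective y
    rw [← map_mul, Ideal.Quotient.eq_zero_iff_mem] at hy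
    rw [Ideal.Quotient.eq_zero_iff_mem]
    exact h z hy

lemma isRegularSequence_iff_nzd (xs : List R) :
    IsRegularSequence xs ↔ ∀ (k : ℕ) (hk : k < xs.length),
      NzdMod (Ideal.span {r | r ∈ xs.take k}) (xs.get ⟨k, hk⟩) := by
  constructor
  · intro h k hk; exact (nzdMod_quot_iff _ _).mp (h k hk)
  · intro h k hk; exact (nzdMod_quot_iff _ _).mpr (h k hk)

lemma smul_top_eq (I : Ideal R) : (I • ⊤ : Submodule R R) = I := by
  rw [smul_eq_mul, Ideal.mul_top]

lemma isWeaklyRegular_iff_nzd (xs : List R) :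
    RingTheory.Sequence.IsWeaklyRegular R xs ↔ ∀ (k : ℕ) (hk : k < xs.length),
      NzdMod (Ideal.span {r | r ∈ xs.take k}) xs[k] := by
  rw [RingTheory.Sequence.isWeaklyRegular_iff]
  refine forall_congr' fun k => forall_congr' fun hk => ?_
  rw [show (Ideal.ofList (xs.take k) • ⊤ : Submodule R R) = Ideal.span {r | r ∈ xs.take k} from
    smul_top_eq _]
  constructor
  · intro h z hz
    have h2 : xs[k] • (Ideal.Quotient.mk (Ideal.span {r | r ∈ xs.take k}) z) =
        xs[k] • (0 : R ⧸ Ideal.span {r | r ∈ xs.take k}) := by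
      rw [smul_zero,
        show xs[k] • (Ideal.Quotient.mk (Ideal.span {r | r ∈ xs.take k}) z) =
          Ideal.Quotient.mk (Ideal.span {r | r ∈ xs.take k}) (xs[k] * z) from rfl,
        Ideal.Quotient.eq_zero_iff_mem]
      exact hz
    have := h h2
    rwa [Ideal.Quotient.eq_zero_iff_mem] at this
  · intro h y₁ y₂ hy
    obtain ⟨z₁, rfl⟩ := Ideal.Quotient.mk_surjective y₁
    obtain ⟨z₂, rfl⟩ := Ideal.Quotient.mk_surjective y₂
    have : xs[k] * z₁ - xs[k] * z₂ ∈ Ideal.span {r | r ∈ xs.take k} := by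
      rw [← Ideal.Quotient.eq]
      exact hy
    rw [← mul_sub] at this
    have := h _ this
    exact Ideal.Quotient.eq.mpr this


section Poly
open Polynomial

variable (I : Ideal R) (a b d : R)

local notation "mapC" => Ideal.map (C : R →+* R[X])

lemma coeff_lin_mul (g : R[X]) (n : ℕ) :
    ((C a * X - C b) * g).coeff (n + 1) = a * g.coeff n - b * g.coeff (n + 1) := by
  rw [sub_mul, Polynomial.coeff_sub, mul_assoc, Polynomial.coeff_C_mul,
    Polynomial.coeff_X_mul, Polynomial.coeff_C_mul]

lemma coeff_lin_mul_zero (g : R[X]) :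
    ((C a * X - C b) * g).coeff 0 = -(b * g.coeff 0) := by
  rw [sub_mul, Polynomial.coeff_sub, mul_assoc, Polynomial.coeff_C_mul,
    Polynomial.coeff_C_mul]
  simp [Polynomial.coeff_X_mul_zero]

/-- (A), trailing-coefficient version -/
lemma nzd_lin_of_trailing (hb : NzdMod I b) :
    NzdMod (mapC I) (C a * X - C b) := by
  intro g hg
  rw [Ideal.mem_map_C_iff] at hg ⊢
  intro n
  induction n with
  | zero =>
    have := hg 0
    rw [coeff_lin_mul_zero] at this
    exact hb _ ((Ideal.neg_mem_iff _).mp this)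
  | succ n ih =>
    have := hg (n + 1)
    rw [coeff_lin_mul] at this
    have h2 : b * g.coeff (n + 1) ∈ I := by
      have := I.sub_mem (I.mul_mem_left a ih) this
      simpa using this
    exact hb _ h2

/-- (A), leading-coefficient version -/
lemma nzd_lin_of_leading (ha : NzdMod I a) :
    NzdMod (mapC I) (C a * X - C b) := by
  intro g hg
  rw [Ideal.mem_map_C_iff] at hg ⊢
  have key : ∀ j n, g.natDegree < n + j → g.coeff n ∈ I := by
    intro j
    induction j with
    | zero => intro n hn; rw [Polynomial.coeff_eq_zero_of_natDegree_lt (by omega)]; exact I.zero_mem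
    | succ j ih =>
      intro n hn
      have hn1 : g.coeff (n + 1) ∈ I := ih (n + 1) (by omega)
      have := hg (n + 1)
      rw [coeff_lin_mul] at this
      have h2 : a * g.coeff n ∈ I := by
        have := I.add_mem this (I.mul_mem_left b hn1)
        simpa using this
      exact ha _ h2
  exact fun n => key (g.natDegree + 1) n (by omega)

lemma lin_mul_C_mem (c : R) (hc : c ∈ I) : (C a * X - C b) * C c ∈ mapC I := by
  have : (C a * X - C b) * C c = C (a * c) * X - C (b * c) := by
    push_cast [Polynomial.C_mul]; ring
  rw [this]
  exact Ideal.sub_mem _ (Ideal.mul_mem_right _ _ (Ideal.mem_map_of_mem _ (I.mul_mem_left a hc)))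
    (Ideal.mem_map_of_mem _ (I.mul_mem_left b hc))

/-- (B): descent lemma -/
lemma nzd_C_mod_lin (h1 : NzdMod (I ⊔ Ideal.span {b}) d) (h2 : NzdMod I b)
    (h3 : NzdMod I d) :
    NzdMod (mapC I ⊔ Ideal.span {C a * X - C b}) (C d) := by
  set f : R[X] := C a * X - C b with hf
  set J : Ideal R[X] := mapC I ⊔ Ideal.span {f} with hJ

  have step : ∀ (h g p : R[X]), p ∈ mapC I → C d * g = p + f * h →
      ∃ (g₁ q h₂ : R[X]), q ∈ mapC I ∧ C d * g₁ = q + f * h₂ ∧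
        h₂.natDegree ≤ h.natDegree - 1 ∧ (h.natDegree = 0 → h₂ = 0) ∧ (g₁ ∈ J → g ∈ J) := by
    intro h g p hp heq
    -- coefficient 0 analysis
    have hc0 : d * g.coeff 0 ∈ I ⊔ Ideal.span {b} := by
      have e0 : d * g.coeff 0 = p.coeff 0 + (-(b * h.coeff 0)) := by
        have := congrArg (fun q => Polynomial.coeff q 0) heq
        simpa [hf, coeff_lin_mul_zero, Polynomial.coeff_add, Polynomial.coeff_C_mul] using this
      rw [e0]
      exact Submodule.add_mem _ (Submodule.mem_sup_left (Ideal.mem_map_C_iff.mp hp 0))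
        (Submodule.neg_mem _ (Submodule.mem_sup_right
          (Ideal.mul_mem_right (h.coeff 0) _ (Ideal.subset_span (Set.mem_singleton b)))))
    obtain ⟨ι, hι, w, hw, hsum⟩ := Submodule.mem_sup.mp (h1 _ hc0)
    obtain ⟨t₀, ht₀⟩ := Ideal.mem_span_singleton'.mp hw
    -- g tilde
    set gt : R[X] := g + f * C t₀ with hgt
    have hgt0 : gt.coeff 0 = ι := by
      have : gt.coeff 0 = g.coeff 0 + (-(b * t₀)) := by
        simp [hgt, hf, Polynomial.coeff_add, coeff_lin_mul_zero, Polynomial.coeff_C]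
      rw [this, ← hsum, ← ht₀]; ring
    set h₁ : R[X] := h + C (d * t₀) with hh₁
    have heq1 : C d * gt = p + f * h₁ := by
      rw [hgt, hh₁, Polynomial.C_mul]
      rw [mul_add, heq]; ring
    set g₁ : R[X] := gt.divX with hg₁
    have hgtd : gt = X * g₁ + C ι := by
      rw [← hgt0]
      linear_combination -(Polynomial.divX_mul_X_add gt)
    set p₁ : R[X] := p - C (d * ι) with hp₁
    have hp₁m : p₁ ∈ mapC I := Submodule.sub_mem _ hp (Ideal.mem_map_of_mem _ (I.mul_mem_left d hι))
    have heqE1 : C d * (X * g₁) = p₁ + f * h₁ := by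
      have : C d * gt = C d * (X * g₁) + C (d * ι) := by
        rw [hgtd, Polynomial.C_mul]; ring
      rw [this] at heq1
      rw [hp₁]; linear_combination heq1
    -- coefficient 0 of E1
    have hh₁0 : h₁.coeff 0 ∈ I := by
      apply h2
      have e0 : (0 : R) = p₁.coeff 0 + (-(b * h₁.coeff 0)) := by
        have := congrArg (fun q => Polynomial.coeff q 0) heqE1
        simpa [hf, coeff_lin_mul_zero, Polynomial.coeff_add, Polynomial.coeff_C_mul,
          Polynomial.mul_coeff_zero, Polynomial.coeff_X_zero] using this
      have : b * h₁.coeff 0 = p₁.coeff 0 := by linear_combination e0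
      rw [this]; exact Ideal.mem_map_C_iff.mp hp₁m 0
    set h₂ : R[X] := h₁.divX with hh₂
    have hh₁d : h₁ = X * h₂ + C (h₁.coeff 0) := by
      linear_combination -(Polynomial.divX_mul_X_add h₁)
    set p₂ : R[X] := p₁ + f * C (h₁.coeff 0) with hp₂
    have hp₂m : p₂ ∈ mapC I := Submodule.add_mem _ hp₁m (lin_mul_C_mem I a b _ hh₁0)
    have heqE2 : C d * (X * g₁) = p₂ + X * (f * h₂) := by
      linear_combination heqE1 + f * hh₁d - hp₂
    have hqm : C d * g₁ - f * h₂ ∈ mapC I := by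
      rw [Ideal.mem_map_C_iff]
      intro n
      have : (C d * g₁ - f * h₂).coeff n = p₂.coeff (n + 1) := by
        have : p₂ = X * (C d * g₁ - f * h₂) := by linear_combination -heqE2
        rw [this, Polynomial.coeff_X_mul]
      rw [this]; exact Ideal.mem_map_C_iff.mp hp₂m (n + 1)
    refine ⟨g₁, C d * g₁ - f * h₂, h₂, hqm, by ring, ?_, ?_, ?_⟩
    · -- degree bound
      have hd1 : h₁.natDegree ≤ h.natDegree := by
        refine le_trans (Polynomial.natDegree_add_le _ _) ?_
        simp only [Polynomial.natDegree_C]; omega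
      calc h₂.natDegree = h₁.natDegree - 1 := Polynomial.natDegree_divX_eq_natDegree_tsub_one
        _ ≤ h.natDegree - 1 := by omega
    · intro hdeg0
      have hd1 : h₁.natDegree = 0 := by
        have : h₁.natDegree ≤ h.natDegree := by
          refine le_trans (Polynomial.natDegree_add_le _ _) ?_
          simp only [Polynomial.natDegree_C]; omega
        omega
      rw [hh₂, Polynomial.divX_eq_zero_iff]
      exact Polynomial.eq_C_of_natDegree_eq_zero hd1
    · intro hg₁
      have : g = X * g₁ + C ι - f * C t₀ := by rw [← hgtd, hgt]; ring
      rw [this]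
      refine Submodule.sub_mem _ (Submodule.add_mem _ (Ideal.mul_mem_left _ _ hg₁) ?_) ?_
      · exact Submodule.mem_sup_left (Ideal.mem_map_of_mem _ hι)
      · exact Submodule.mem_sup_right (Ideal.mul_mem_right _ _ (Ideal.subset_span rfl))
  have key : ∀ N (h g p : R[X]), h.natDegree ≤ N → p ∈ mapC I →
      C d * g = p + f * h → g ∈ J := by
    intro N
    induction N with
    | zero =>
      intro h g p hdeg hp heq
      obtain ⟨g₁, q, h₂, hq, heq2, _, hz, himp⟩ := step h g p hp heq
      rw [hz (Nat.le_zero.mp hdeg), mul_zero, add_zero] at heq2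
      apply himp
      apply Submodule.mem_sup_left
      rw [Ideal.mem_map_C_iff]
      intro n
      apply h3
      have : d * g₁.coeff n = q.coeff n := by
        have := congrArg (fun q => Polynomial.coeff q n) heq2
        simpa [Polynomial.coeff_C_mul] using this
      rw [this]; exact Ideal.mem_map_C_iff.mp hq n
    | succ N IH =>
      intro h g p hdeg hp heq
      obtain ⟨g₁, q, h₂, hq, heq2, hdb, _, himp⟩ := step h g p hp heq
      exact himp (IH h₂ g₁ q (by omega) hq heq2)
  intro g hg
  obtain ⟨p, hp, w, hw, hpw⟩ := Submodule.mem_sup.mp hg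
  obtain ⟨h, hh⟩ := Ideal.mem_span_singleton'.mp hw
  exact key h.natDegree h g p le_rfl hp (by rw [← hpw, ← hh]; ring)

end Poly

lemma mem_map_equiv_iff (e : R ≃+* S) (I : Ideal R) (y : R) :
    e y ∈ I.map (e : R →+* S) ↔ y ∈ I := by
  constructor
  · intro hy
    obtain ⟨z, hz, hze⟩ := (Ideal.mem_map_iff_of_surjective _ e.surjective).mp hy
    rwa [← e.injective hze]
  · exact fun hy => Ideal.mem_map_of_mem _ hy

lemma nzdMod_of_map_equiv (e : R ≃+* S) (I : Ideal R) (d : R)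
    (h : NzdMod (I.map (e : R →+* S)) (e d)) : NzdMod I d := by
  intro g hg
  have h2 : e d * e g ∈ I.map (e : R →+* S) := by
    rw [← map_mul]; exact (mem_map_equiv_iff e I _).mpr hg
  exact (mem_map_equiv_iff e I g).mp (h _ h2)

lemma nzdMod_map_C_mv {σ : Type*} (I : Ideal R) (d : R) (h : NzdMod I d) :
    NzdMod (I.map (MvPolynomial.C : R →+* MvPolynomial σ R)) (MvPolynomial.C d) := by
  intro g hg
  rw [MvPolynomial.mem_map_C_iff] at hg ⊢
  intro n
  have := hg n
  rw [MvPolynomial.coeff_C_mul] at this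
  exact h _ this

lemma nzdMod_map_equiv (e : R ≃+* S) (I : Ideal R) (d : R) (h : NzdMod I d) :
    NzdMod (I.map (e : R →+* S)) (e d) := by
  intro g hg
  obtain ⟨x, rfl⟩ := e.surjective g
  rw [← map_mul, mem_map_equiv_iff] at hg
  exact (mem_map_equiv_iff e I x).mpr (h x hg)

lemma fm_cons_none {α β : Type*} (f : α → Option β) (a : α) (l : List α) (h : f a = none) :
    (a :: l).filterMap f = l.filterMap f := by rw [List.filterMap_cons, h]

lemma fm_cons_some {α β : Type*} (f : α → Option β) (a : α) (l : List α) (b : β)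
    (h : f a = some b) : (a :: l).filterMap f = b :: l.filterMap f := by
  rw [List.filterMap_cons, h]

lemma filterMap_finRange_eq {β : Type*} : ∀ (n : ℕ) (i : Fin (n+1))
    (G : (j : Fin (n+1)) → j ≠ i → β),
    (List.finRange (n+1)).filterMap (fun j => if h : j = i then none else some (G j h)) =
      (List.finRange n).map (fun k => G (i.succAbove k) (Fin.succAbove_ne i k)) := by
  intro n
  induction n with
  | zero =>
    intro i G
    have hi : i = 0 := Fin.fin_one_eq_zero i
    subst hi
    simp [List.finRange_succ]
  | succ n IH =>
    intro i G
    induction i using Fin.cases with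
    | zero =>
      rw [List.finRange_succ, fm_cons_none (fun j => if h : j = (0:Fin (n+2)) then none else some (G j h)) _ _ (by simp), List.filterMap_map]
      have : ∀ k ∈ List.finRange (n+1),
          ((fun j => if h : j = (0 : Fin (n+2)) then none else some (G j h)) ∘ Fin.succ) k =
            (some ∘ fun k : Fin (n+1) => G k.succ (Fin.succ_ne_zero k)) k := by
        intro k _
        simp only [Function.comp_apply, dif_neg (Fin.succ_ne_zero k)]
      rw [List.filterMap_congr this, List.filterMap_eq_map]
      simp [Fin.succAbove_zero]
    | succ j =>
      have h0 : (0 : Fin (n+2)) ≠ j.succ := (Fin.succ_ne_zero j).symm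
      rw [List.finRange_succ, fm_cons_some (fun x => if h : x = j.succ then none else some (G x h)) _ _ (G 0 h0) (by simp [h0]), List.filterMap_map]
      have hfun : ∀ k ∈ List.finRange (n+1),
          ((fun x => if h : x = j.succ then none else some (G x h)) ∘ Fin.succ) k =
            (if h : k = j then none else some (G k.succ (by simp [Fin.succ_inj]; exact h))) := by
        intro k _
        by_cases hk : k = j
        · subst hk; simp
        · simp only [Function.comp_apply, dif_neg (fun hc => hk (Fin.succ_inj.mp hc)), dif_neg hk]
      rw [List.filterMap_congr hfun,
        IH j (fun k h => G k.succ (by simp [Fin.succ_inj]; exact h))]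
      rw [List.finRange_succ, List.map_cons, List.map_map]
      congr 1
      · apply List.map_congr_left
        intro k _
        simp only [Function.comp_apply]
        congr 1
        exact (Fin.succ_succAbove_succ j k).symm

lemma mem_set_singleton_list (y : α) : {x : α | x ∈ [y]} = {y} := by
  ext x; simp

lemma span_image_append {α : Type*} (b : α → R) (P Q : List α) :
    Ideal.span (b '' {x | x ∈ P ++ Q}) =
      Ideal.span (b '' {x | x ∈ P}) ⊔ Ideal.span (b '' {x | x ∈ Q}) := by
  have : {x | x ∈ P ++ Q} = {x | x ∈ P} ∪ {x | x ∈ Q} := by ext x; simp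
  rw [this, Set.image_union, Ideal.span_union]

open MvPolynomial in
theorem master : ∀ (n : ℕ) (R : Type) (_ : CommRing R) (a : R) (b : Fin n → R) (J : Ideal R)
    (m : ℕ),
    (∀ (P : List (Fin n)) (j : Fin n), P.Nodup → j ∉ P → (∀ x ∈ P, (x : ℕ) < m) → (j : ℕ) < m →
      NzdMod (J ⊔ Ideal.span (b '' {x | x ∈ P})) (b j)) →
    (m = n ∨ (∃ h : m < n, ∃ v, b ⟨m, h⟩ * v - 1 ∈ J) ∨ (∃ v, a * v - 1 ∈ J)) →
    ∀ (k : ℕ) (hk : k < n),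
      NzdMod (J.map (C : R →+* MvPolynomial (Fin n) R) ⊔
          Ideal.span ((fun j : Fin n => C a * X j - C (b j)) '' {j | (j : ℕ) < k}))
        (C a * X ⟨k, hk⟩ - C (b ⟨k, hk⟩)) := by
  intro n
  induction n with
  | zero => intro R _ a b J m h1 h2 k hk; omega
  | succ n IH =>
    intro R _ a b J m H1 H2 k hk
    classical
    set R₁ := Polynomial R with hR₁
    set f₀ : R₁ := Polynomial.C a * Polynomial.X - Polynomial.C (b 0) with hf₀
    set J₁ : Ideal R₁ := J.map (Polynomial.C : R →+* R₁) ⊔ Ideal.span {f₀} with hJ₁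
    set a₁ : R₁ := Polynomial.C a with ha₁
    set b₁ : Fin n → R₁ := fun j => Polynomial.C (b j.succ) with hb₁
    set e : MvPolynomial (Fin (n+1)) R ≃+* MvPolynomial (Fin n) R₁ :=
      ((MvPolynomial.renameEquiv R (_root_.finSuccEquiv n)).trans
        (MvPolynomial.optionEquivRight R (Fin n))).toRingEquiv with he
    have eX0 : e (X 0) = C Polynomial.X := by
      simp [he, MvPolynomial.optionEquivRight_X_none]
    have eXs : ∀ j : Fin n, e (X j.succ) = X j := by
      intro j; simp [he, MvPolynomial.optionEquivRight_X_some]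
    have eC : ∀ r : R, e (C r) = C (Polynomial.C r) := by
      intro r; simp [he, MvPolynomial.optionEquivRight_C]
    have hmapC : (J.map (C : R →+* MvPolynomial (Fin (n+1)) R)).map (e : _ →+* _) =
        (J.map (Polynomial.C : R →+* R₁)).map (C : R₁ →+* MvPolynomial (Fin n) R₁) := by
      rw [Ideal.map_map, Ideal.map_map]
      congr 1
      exact RingHom.ext fun r => eC r
    have ef0 : e (C a * X 0 - C (b 0)) = C f₀ := by
      rw [map_sub, map_mul, eX0, eC, eC, hf₀, map_sub, map_mul]
    have efs : ∀ j : Fin n, e (C a * X j.succ - C (b j.succ)) = C a₁ * X j - C (b₁ j) := by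
      intro j; rw [map_sub, map_mul, eXs, eC, eC]
    -- the H1 hypothesis for the smaller ring
    have H1' : ∀ (P : List (Fin n)) (j : Fin n), P.Nodup → j ∉ P →
        (∀ x ∈ P, (x : ℕ) < m - 1) → (j : ℕ) < m - 1 →
        NzdMod (J₁ ⊔ Ideal.span (b₁ '' {x | x ∈ P})) (b₁ j) := by
      intro P j hnd hjP hPm hjm
      have hm2 : 0 < m := by omega
      have hAnd : (P.map Fin.succ).Nodup := hnd.map (Fin.succ_injective n)
      have hAbound : ∀ x ∈ P.map Fin.succ, (x : ℕ) < m := by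
        intro x hx
        obtain ⟨y, hy, rfl⟩ := List.mem_map.mp hx
        have := hPm y hy
        simp [Fin.val_succ]; omega
      have hjb : ((j.succ : Fin (n+1)) : ℕ) < m := by simp [Fin.val_succ]; omega
      have hjA : j.succ ∉ P.map Fin.succ := by
        intro hmem
        obtain ⟨y, hy, hye⟩ := List.mem_map.mp hmem
        exact hjP ((Fin.succ_injective n hye) ▸ hy)
      have hs1 : (Polynomial.C : R →+* R₁) '' (b '' {x | x ∈ P.map Fin.succ}) = b₁ '' {x | x ∈ P} := by
        have h0 : {x : Fin (n+1) | x ∈ P.map Fin.succ} = Fin.succ '' {x | x ∈ P} := by ext x; simp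
        rw [h0, Set.image_image, Set.image_image, hb₁]
      have hideal : J₁ ⊔ Ideal.span (b₁ '' {x | x ∈ P}) =
          Ideal.map (Polynomial.C : R →+* R₁) (J ⊔ Ideal.span (b '' {x | x ∈ P.map Fin.succ}))
            ⊔ Ideal.span {f₀} := by
        rw [← hs1, Ideal.map_sup, Ideal.map_span, hJ₁, sup_right_comm]
      rw [hideal, show b₁ j = Polynomial.C (b j.succ) from rfl, hf₀]
      apply nzd_C_mod_lin _ a
      · -- h1 : NzdMod (I ⊔ span {b 0}) (b j.succ)
        have key := H1 (P.map Fin.succ ++ [0]) j.succ ?_ ?_ ?_ hjb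
        · rw [span_image_append, mem_set_singleton_list, Set.image_singleton, ← sup_assoc] at key
          exact key
        · rw [List.nodup_append]
          refine ⟨hAnd, List.nodup_singleton 0, ?_⟩
          intro x hx z hz hx0
          obtain ⟨y, _, rfl⟩ := List.mem_map.mp hx
          simp at hz; subst hz
          exact Fin.succ_ne_zero y hx0
        · intro hmem
          rcases List.mem_append.mp hmem with h | h
          · exact hjA h
          · simp at h
        · intro x hx
          rcases List.mem_append.mp hx with h | h
          · exact hAbound x h
          · simp at h; subst h; simpa using hm2
      · -- h2 : NzdMod I (b 0)
        exact H1 (P.map Fin.succ) 0 hAnd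
          (by intro hmem; obtain ⟨y, _, hye⟩ := List.mem_map.mp hmem; exact Fin.succ_ne_zero y hye)
          hAbound (by simpa using hm2)
      · -- h3 : NzdMod I (b j.succ)
        exact H1 (P.map Fin.succ) j.succ hAnd hjA hAbound hjb
    -- the H2 hypothesis for the smaller ring
    have H2' : (m - 1 = n ∨ (∃ h : m - 1 < n, ∃ v, b₁ ⟨m - 1, h⟩ * v - 1 ∈ J₁) ∨
        (∃ v, a₁ * v - 1 ∈ J₁)) := by
      rcases H2 with hm | ⟨hlt, v, hv⟩ | ⟨v, hv⟩
      · left; omega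
      · by_cases hm0 : m = 0
        · right; right
          refine ⟨Polynomial.X * Polynomial.C v, ?_⟩
          have hb0 : b ⟨m, hlt⟩ = b 0 := by congr 1; ext; simp [hm0]
          have hexp : a₁ * (Polynomial.X * Polynomial.C v) - 1 =
              f₀ * Polynomial.C v + Polynomial.C (b 0 * v - 1) := by
            rw [hf₀, ha₁, map_sub, map_mul, map_one]; ring
          rw [hexp]
          refine Submodule.add_mem _ (Submodule.mem_sup_right
            (Ideal.mul_mem_right _ _ (Ideal.subset_span (Set.mem_singleton _)))) ?_
          exact Submodule.mem_sup_left (Ideal.mem_map_of_mem _ (hb0 ▸ hv))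
        · right; left
          refine ⟨by omega, Polynomial.C v, ?_⟩
          have hsucc2 : (⟨m - 1, by omega⟩ : Fin n).succ = ⟨m, hlt⟩ := by
            ext; simp [Fin.val_succ]; omega
          have hbm : b₁ ⟨m - 1, by omega⟩ = Polynomial.C (b ⟨m, hlt⟩) := by
            rw [hb₁]; show Polynomial.C (b (⟨m - 1, by omega⟩ : Fin n).succ) = _
            rw [hsucc2]
          rw [hbm, show Polynomial.C (b ⟨m, hlt⟩) * Polynomial.C v - 1 =
            Polynomial.C (b ⟨m, hlt⟩ * v - 1) from by rw [map_sub, map_mul, map_one]]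
          exact Submodule.mem_sup_left (Ideal.mem_map_of_mem _ hv)
      · right; right
        refine ⟨Polynomial.C v, ?_⟩
        rw [ha₁, show Polynomial.C a * Polynomial.C v - 1 = Polynomial.C (a * v - 1) from by
          rw [map_sub, map_mul, map_one]]
        exact Submodule.mem_sup_left (Ideal.mem_map_of_mem _ hv)
    -- case on k
    match k, hk with
    | 0, hk =>
      have himg : ((fun j : Fin (n+1) => C a * X j - C (b j)) '' {j : Fin (n+1) | (j:ℕ) < 0}) = ∅ := by
        convert Set.image_empty _
        ext j; simp
      rw [himg, Ideal.span_empty, sup_bot_eq, show (⟨0, hk⟩ : Fin (n+1)) = 0 from rfl]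
      apply nzdMod_of_map_equiv e
      rw [hmapC, ef0]
      apply nzdMod_map_C_mv
      rw [hf₀]
      by_cases hm0 : 0 < m
      · apply nzd_lin_of_trailing
        have key := H1 [] 0 (List.nodup_nil) List.not_mem_nil (by simp)
          (by simpa using hm0)
        simpa using key
      · have hm0' : m = 0 := by omega
        have hnz : NzdMod J (b 0) ∨ NzdMod J a := by
          rcases H2 with hm | ⟨hlt, v, hv⟩ | ⟨v, hv⟩
          · omega
          · left
            have hb0 : (⟨m, hlt⟩ : Fin (n+1)) = 0 := by ext; simp [hm0']
            exact nzdMod_of_unitMod (hb0 ▸ hv)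
          · right; exact nzdMod_of_unitMod hv
        rcases hnz with h | h
        · exact nzd_lin_of_trailing _ _ _ h
        · exact nzd_lin_of_leading _ _ _ h
    | (k' + 1), hk =>
      have hk' : k' < n := by omega
      apply nzdMod_of_map_equiv e
      have hset : {j : Fin (n+1) | (j:ℕ) < k'+1} =
          insert 0 (Fin.succ '' {j : Fin n | (j:ℕ) < k'}) := by
        ext j
        constructor
        · intro hj
          rcases Fin.eq_zero_or_eq_succ j with h | ⟨j', rfl⟩
          · exact Set.mem_insert_iff.mpr (Or.inl h)
          · refine Set.mem_insert_iff.mpr (Or.inr ⟨j', ?_, rfl⟩)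
            simp only [Set.mem_setOf_eq]
            have : ((j'.succ : Fin (n+1)) : ℕ) = (j' : ℕ) + 1 := Fin.val_succ j'
            simp only [Set.mem_setOf_eq] at hj
            omega
        · intro hj
          rcases Set.mem_insert_iff.mp hj with rfl | ⟨j', hj', rfl⟩
          · simp
          · simp only [Set.mem_setOf_eq] at hj' ⊢
            rw [Fin.val_succ]; omega
      rw [Ideal.map_sup, hmapC, Ideal.map_span, Set.image_image, hset, Set.image_insert_eq,
        Ideal.span_insert, Set.image_image]
      have ecoe : ∀ x : MvPolynomial (Fin (n+1)) R,
          (↑e : MvPolynomial (Fin (n+1)) R →+* MvPolynomial (Fin n) R₁) x = e x := fun _ => rfl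
      simp only [ecoe, ef0, efs]
      rw [show (⟨k'+1, hk⟩ : Fin (n+1)) = Fin.succ ⟨k', hk'⟩ from rfl, efs,
        ← sup_assoc, show (J.map (Polynomial.C : R →+* R₁)).map (C : R₁ →+* MvPolynomial (Fin n) R₁)
          ⊔ Ideal.span {C f₀} = J₁.map (C : R₁ →+* MvPolynomial (Fin n) R₁) from by
          rw [hJ₁, Ideal.map_sup, Ideal.map_span, Set.image_singleton]]
      exact IH R₁ _ a₁ b₁ J₁ (m - 1) H1' H2' k' hk'

lemma mem_take_finRange {N s : ℕ} (x : Fin N) :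
    x ∈ (List.finRange N).take s ↔ (x : ℕ) < s := by
  constructor
  · intro hx
    obtain ⟨i, hi, hix⟩ := List.mem_iff_getElem.mp hx
    have hlen : i < s := lt_of_lt_of_le hi (by simp [List.length_take])
    have : ((List.finRange N).take s)[i] = (List.finRange N)[i]'(by
      simp at hi ⊢; omega) := List.getElem_take
    rw [this, List.getElem_finRange] at hix
    rw [← hix]
    simpa using hlen
  · intro hx
    have hi : (x : ℕ) < ((List.finRange N).take s).length := by
      simp only [List.length_take, lt_min_iff]
      exact ⟨hx, by simpa using x.isLt⟩
    refine List.mem_iff_getElem.mpr ⟨(x : ℕ), hi, ?_⟩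
    rw [List.getElem_take, List.getElem_finRange]
    apply Fin.ext
    simp

open RingTheory.Sequence in
lemma Areg {A : Type} [CommRing A] [IsNoetherianRing A] [IsLocalRing A] {N : ℕ}
    (a : Fin N → A) (hw : IsWeaklyRegular A ((List.finRange N).map a))
    (s : ℕ) (hs : ∀ x : Fin N, (x : ℕ) < s → ¬IsUnit (a x)) :
    ∀ (Q : List (Fin N)) (j : Fin N), Q.Nodup → j ∉ Q → (∀ x ∈ Q, (x : ℕ) < s) →
      (j : ℕ) < s → NzdMod (Ideal.span (a '' {x | x ∈ Q})) (a j) := by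
  intro Q j hnd hjQ hQs hjs
  classical
  set B : List (Fin N) := (List.finRange N).take s with hB
  have hBnd : B.Nodup := (List.take_sublist _ _).nodup (List.nodup_finRange N)
  have hBwr : IsWeaklyRegular A (B.map a) := by
    have hsplit : (List.finRange N).map a = B.map a ++ ((List.finRange N).drop s).map a := by
      rw [← List.map_append, List.take_append_drop]
    rw [hsplit, isWeaklyRegular_append_iff] at hw
    exact hw.1
  set Qc : List (Fin N) := B.filter (fun x => decide (x ∉ Q ++ [j])) with hQc
  have hQcB : ∀ x ∈ Qc, x ∈ B := fun x hx => (List.mem_filter.mp hx).1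
  have hQcn : ∀ x ∈ Qc, x ∉ Q ++ [j] := fun x hx => by
    have := (List.mem_filter.mp hx).2; simpa using this
  have hQB : ∀ x ∈ Q, x ∈ B := fun x hx => (mem_take_finRange x).mpr (hQs x hx)
  have hjB : j ∈ B := (mem_take_finRange j).mpr hjs
  have hperm : List.Perm (Q ++ j :: Qc) B := by
    apply List.perm_of_nodup_nodup_toFinset_eq
    · rw [List.nodup_append]
      refine ⟨hnd, ?_, ?_⟩
      · rw [List.nodup_cons]
        refine ⟨fun hc => (hQcn j hc) (by simp), (hBnd.filter _)⟩
      · intro x hxQ y hxc hxy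
        subst hxy
        rcases List.mem_cons.mp hxc with rfl | hxc
        · exact hjQ hxQ
        · exact hQcn x hxc (by simp [hxQ])
    · exact hBnd
    · ext x
      simp only [List.toFinset_append, Finset.mem_union, List.mem_toFinset, List.mem_cons]
      constructor
      · rintro (hx | rfl | hx)
        · exact hQB x hx
        · exact hjB
        · exact hQcB x hx
      · intro hx
        by_cases hc : x ∈ Q ++ [j]
        · rcases List.mem_append.mp hc with h | h
          · exact Or.inl h
          · right; left; simpa using h
        · right; right
          rw [hQc, List.mem_filter]
          exact ⟨hx, by simpa using hc⟩
  have hwr2 : IsWeaklyRegular A ((Q ++ j :: Qc).map a) := by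
    refine IsLocalRing.isWeaklyRegular_of_perm_of_subset_maximalIdeal hBwr
      ((hperm.symm).map a) ?_
    intro x hx
    obtain ⟨y, hy, rfl⟩ := List.mem_map.mp hx
    rw [IsLocalRing.mem_maximalIdeal]
    exact hs y ((mem_take_finRange y).mp hy)
  rw [isWeaklyRegular_iff_nzd] at hwr2
  have hlen : Q.length < ((Q ++ j :: Qc).map a).length := by
    simp
  have key := hwr2 Q.length hlen
  have htake : ((Q ++ j :: Qc).map a).take Q.length = Q.map a := by
    rw [List.map_append]
    exact List.take_left' (by simp)
  have hget : ((Q ++ j :: Qc).map a)[Q.length]'hlen = a j := by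
    rw [List.getElem_of_eq (by simp : (Q ++ j :: Qc).map a = Q.map a ++ (a j :: Qc.map a))]
    rw [List.getElem_append_right (by simp)]
    simp
  have hset : {r | r ∈ Q.map a} = a '' {x | x ∈ Q} := by
    ext y; simp [List.mem_map]
  convert key using 2
  · rw [htake]; exact hset.symm
  · exact hget.symm

lemma val_succAbove {N : ℕ} (i : Fin (N+1)) (k : Fin N) :
    ((i.succAbove k : Fin (N+1)) : ℕ) = if (k : ℕ) < (i : ℕ) then (k : ℕ) else (k : ℕ) + 1 := by
  by_cases h : (k : ℕ) < (i : ℕ)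
  · rw [Fin.succAbove_of_castSucc_lt _ _ (by simpa [Fin.lt_def] using h)]
    simp [h]
  · rw [Fin.succAbove_of_le_castSucc _ _ (by simpa [Fin.le_def] using not_lt.mp h)]
    simp [h]


end St5

open St5 in
open MvPolynomial in
theorem statement5 (A : Type) [CommRing A] [IsNoetherianRing A] [IsLocalRing A]
    (r : ℕ) (hr : 1 ≤ r) (a : Fin (r + 1) → A)
    (hreg : IsRegularSequence ((List.finRange (r + 1)).map a)) (i : Fin (r + 1)) :
    IsRegularSequence
      ((List.finRange (r + 1)).filterMap (fun j =>
        if h : j = i then none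
        else some (C (a i) * X (⟨j, h⟩ : {j : Fin (r + 1) // j ≠ i}) - C (a j)))) := by
  classical
  set b : Fin r → A := fun k => a (i.succAbove k) with hb
  have hex : ∃ j, j = r + 1 ∨ ∃ h : j < r + 1, IsUnit (a ⟨j, h⟩) := ⟨r + 1, Or.inl rfl⟩
  set s := Nat.find hex with hsdef
  have hs_spec : s = r + 1 ∨ ∃ h : s < r + 1, IsUnit (a ⟨s, h⟩) := Nat.find_spec hex
  have hs_le : s ≤ r + 1 := Nat.find_le (Or.inl rfl)
  have hs_nonunit : ∀ x : Fin (r+1), (x : ℕ) < s → ¬IsUnit (a x) := by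
    intro x hx hu
    refine Nat.find_min hex hx (Or.inr ⟨x.isLt, ?_⟩)
    convert hu using 2
  set m : ℕ := if (i : ℕ) < s then s - 1 else s with hm
  have hb_lt : ∀ k : Fin r, (k : ℕ) < m → ((i.succAbove k : Fin (r+1)) : ℕ) < s := by
    intro k hk
    rw [val_succAbove]
    by_cases h1 : (k : ℕ) < (i : ℕ)
    · rw [if_pos h1]
      by_cases h2 : (i : ℕ) < s
      · rw [hm, if_pos h2] at hk; omega
      · rw [hm, if_neg h2] at hk; omega
    · rw [if_neg h1]
      by_cases h2 : (i : ℕ) < s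
      · rw [hm, if_pos h2] at hk; omega
      · rw [hm, if_neg h2] at hk; omega
  have hwr : RingTheory.Sequence.IsWeaklyRegular A ((List.finRange (r+1)).map a) := by
    rw [isWeaklyRegular_iff_nzd]
    exact fun k hk => (isRegularSequence_iff_nzd _).mp hreg k hk
  have H1top : ∀ (P : List (Fin r)) (j : Fin r), P.Nodup → j ∉ P →
      (∀ x ∈ P, (x : ℕ) < m) → (j : ℕ) < m →
      NzdMod ((⊥ : Ideal A) ⊔ Ideal.span (b '' {x | x ∈ P})) (b j) := by
    intro P j hnd hjP hPm hjm
    rw [bot_sup_eq]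
    have himg : b '' {x | x ∈ P} = a '' {x | x ∈ P.map (i.succAbove)} := by
      have hs2 : {x : Fin (r+1) | x ∈ P.map (i.succAbove)} = (i.succAbove) '' {x | x ∈ P} := by
        ext x; simp
      rw [hs2, Set.image_image, hb]
    rw [himg]
    refine Areg a hwr s hs_nonunit (P.map i.succAbove) (i.succAbove j)
      (hnd.map (Fin.succAbove_right_injective)) ?_ ?_ (hb_lt j hjm)
    · intro hc
      obtain ⟨y, hy, hye⟩ := List.mem_map.mp hc
      exact hjP (Fin.succAbove_right_injective hye ▸ hy)
    · intro x hx
      obtain ⟨y, hy, rfl⟩ := List.mem_map.mp hx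
      exact hb_lt y (hPm y hy)
  have H2top : m = r ∨ (∃ h : m < r, ∃ v, b ⟨m, h⟩ * v - 1 ∈ (⊥ : Ideal A)) ∨
      (∃ v, a i * v - 1 ∈ (⊥ : Ideal A)) := by
    rcases hs_spec with hsr | ⟨hlt, hu⟩
    · left
      have : (i : ℕ) < s := by omega
      rw [hm, if_pos this]; omega
    · by_cases his : (i : ℕ) = s
      · right; right
        obtain ⟨v, hv⟩ := hu.exists_right_inv
        refine ⟨v, ?_⟩
        have : a i = a ⟨s, hlt⟩ := by congr 1; exact Fin.ext his
        rw [this, hv]; simp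
      · by_cases hilt : (i : ℕ) < s
        · right; left
          have hs1 : 1 ≤ s := by omega
          have hmv : m = s - 1 := by rw [hm, if_pos hilt]
          have h1 : m < r := by omega
          obtain ⟨v, hv⟩ := hu.exists_right_inv
          refine ⟨h1, v, ?_⟩
          have hbm : b ⟨m, h1⟩ = a ⟨s, hlt⟩ := by
            rw [hb]
            show a (i.succAbove ⟨m, h1⟩) = a ⟨s, hlt⟩
            congr 1
            apply Fin.ext
            rw [val_succAbove]
            have : ¬((⟨m, h1⟩ : Fin r) : ℕ) < (i : ℕ) := by simp; omega
            rw [if_neg this]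
            simp; omega
          rw [hbm, hv]; simp
        · right; left
          have hmv : m = s := by rw [hm, if_neg hilt]
          have h1 : m < r := by omega
          obtain ⟨v, hv⟩ := hu.exists_right_inv
          refine ⟨h1, v, ?_⟩
          have hbm : b ⟨m, h1⟩ = a ⟨s, hlt⟩ := by
            rw [hb]
            show a (i.succAbove ⟨m, h1⟩) = a ⟨s, hlt⟩
            congr 1
            apply Fin.ext
            rw [val_succAbove]
            have : ((⟨m, h1⟩ : Fin r) : ℕ) < (i : ℕ) := by simp; omega
            rw [if_pos this]
            simp; omega
          rw [hbm, hv]; simp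
  have key := master r A inferInstance (a i) b ⊥ m H1top H2top
  -- transfer
  have hbij : Function.Bijective (fun k : Fin r => (⟨i.succAbove k, Fin.succAbove_ne i k⟩ :
      {j : Fin (r+1) // j ≠ i})) := by
    constructor
    · intro x y hxy
      exact Fin.succAbove_right_injective (congrArg Subtype.val hxy)
    · rintro ⟨y, hy⟩
      obtain ⟨k, hk⟩ := Fin.exists_succAbove_eq hy
      exact ⟨k, Subtype.ext hk⟩
  set eqv : Fin r ≃ {j : Fin (r+1) // j ≠ i} := Equiv.ofBijective _ hbij with heqv
  set ψ : MvPolynomial (Fin r) A ≃+* MvPolynomial {j : Fin (r+1) // j ≠ i} A :=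
    (MvPolynomial.renameEquiv A eqv).toRingEquiv with hψ
  rw [filterMap_finRange_eq r i
    (fun j h => C (a i) * X (⟨j, h⟩ : {j : Fin (r + 1) // j ≠ i}) - C (a j))]
  rw [isRegularSequence_iff_nzd]
  intro k hk
  have hk' : k < r := by simpa using hk
  have hF : ∀ k : Fin r, C (a i) * X (eqv k) - C (b k) =
      C (a i) * X (⟨i.succAbove k, Fin.succAbove_ne i k⟩ : {j : Fin (r+1) // j ≠ i})
        - C (a (i.succAbove k)) := fun _ => rfl
  -- the element
  have hget : ((List.finRange r).map (fun k : Fin r =>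
      C (a i) * X (⟨i.succAbove k, Fin.succAbove_ne i k⟩ : {j : Fin (r+1) // j ≠ i})
        - C (a (i.succAbove k)))).get ⟨k, hk⟩ = C (a i) * X (eqv ⟨k, hk'⟩) - C (b ⟨k, hk'⟩) := by
    rw [hF]
    rw [List.get_eq_getElem, List.getElem_map, List.getElem_finRange]
    congr 1
  rw [hget]
  -- the ideal
  have htake : {x | x ∈ (((List.finRange r).map (fun k : Fin r =>
      C (a i) * X (⟨i.succAbove k, Fin.succAbove_ne i k⟩ : {j : Fin (r+1) // j ≠ i})
        - C (a (i.succAbove k)))).take k)} =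
      (fun j : Fin r => C (a i) * X (eqv j) - C (b j)) '' {j : Fin r | (j : ℕ) < k} := by
    ext x
    simp only [← List.map_take, List.mem_map, Set.mem_setOf_eq, Set.mem_image]
    constructor
    · rintro ⟨y, hy, rfl⟩
      exact ⟨y, (mem_take_finRange y).mp hy, (hF y).symm⟩
    · rintro ⟨y, hy, rfl⟩
      exact ⟨y, (mem_take_finRange y).mpr hy, (hF y).symm⟩
  rw [htake]
  -- now transfer key through ψ
  have hψf : ∀ j : Fin r, ψ (C (a i) * X j - C (b j)) = C (a i) * X (eqv j) - C (b j) := by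
    intro j
    rw [hψ]
    simp [MvPolynomial.rename_C, MvPolynomial.rename_X]
  have key' := nzdMod_map_equiv ψ _ _ (key k hk')
  have hcoe : ∀ x : MvPolynomial (Fin r) A,
      (↑ψ : MvPolynomial (Fin r) A →+* MvPolynomial {j : Fin (r+1) // j ≠ i} A) x = ψ x :=
    fun _ => rfl
  simp only [Ideal.map_sup, Ideal.map_bot, bot_sup_eq, Ideal.map_span, Set.image_image,
    hcoe, hψf] at key'
  exact key'
end

section
/- Let A be a noetherian local commutative ring and let (a_0, …, a_r) be a regular sequence in A with r ≥ 1. Fix an index i with 0 ≤ i ≤ r and let B_i = A[S_0, …, Ŝ_i, …, S_r]/(a_i S_j − a_j : j ≠ i) be the i-th standard affine chart of the blow-up of Spec A in the ideal (a_0, …, a_r). Then for every n ≥ 1 the image of a_i^n in B_i is a nonzerodivisor. (Hence the exceptional divisor and each of its infinitesimal thickenings are cut out in this chart by a single regular element.) -/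
private def RegMem {A : Type*} [CommRing A] {m : ℕ} (x : Fin m → A) : Prop :=
  ∀ (k : Fin m) (c : A), c * x k ∈ Ideal.span (x '' {j | j < k}) →
    c ∈ Ideal.span (x '' {j | j < k})

private lemma sum_antisym_zero {ι M : Type*} [Fintype ι] [AddCommGroup M]
    (t : ι → ι → M) (h1 : ∀ j k, t j k = - t k j) (h2 : ∀ j, t j j = 0) :
    ∑ j, ∑ k, t j k = 0 := by
  classical
  rw [← Finset.sum_product']
  refine Finset.sum_ninvolution (fun p => (p.2, p.1)) ?_ ?_ (fun _ => Finset.mem_univ _)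
    (fun _ => rfl)
  · intro a; simp [h1 a.1 a.2]
  · intro a ha h
    apply ha
    have : a.2 = a.1 := congrArg Prod.fst h
    rw [this, h2]




private lemma koszul {A : Type*} [CommRing A] :
    ∀ (m : ℕ) (x : Fin (m+1) → A), RegMem x →
    ∀ c : Fin (m+1) → A, (∑ j, c j * x j) = 0 →
    ∃ h : Fin (m+1) → Fin (m+1) → A,
      (∀ j k, h j k = - h k j) ∧ (∀ j, h j j = 0) ∧ (∀ j, c j = ∑ k, h j k * x k) := by
  intro m
  induction m with
  | zero =>
    intro x hx c hc
    have hset : ({j : Fin 1 | j < 0} : Set (Fin 1)) = ∅ := by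
      ext j; simp [Fin.lt_iff_val_lt_val]
    have h0 : c 0 * x 0 ∈ Ideal.span (x '' {j | j < 0}) := by
      rw [hset, Set.image_empty, Ideal.span_empty]
      rw [Fin.sum_univ_one] at hc
      simpa using hc
    have := hx 0 (c 0) h0
    rw [hset, Set.image_empty, Ideal.span_empty, Ideal.mem_bot] at this
    refine ⟨0, by simp, by simp, fun j => ?_⟩
    rw [Fin.fin_one_eq_zero j, this]
    simp
  | succ m ih =>
    intro x hx c hc
    classical
    have hne : ∀ k : Fin (m+1), k.castSucc ≠ Fin.last (m+1) :=
      fun k => Fin.lt_last_iff_ne_last.mp (Fin.castSucc_lt_last k)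
    have hsetL : x '' {j | j < Fin.last (m+1)}
        = Set.range (fun j : Fin (m+1) => x j.castSucc) := by
      ext b
      constructor
      · rintro ⟨j, hj, rfl⟩
        obtain ⟨j', rfl⟩ := Fin.exists_castSucc_eq.mpr (Fin.lt_last_iff_ne_last.mp hj)
        exact ⟨j', rfl⟩
      · rintro ⟨j', rfl⟩
        exact ⟨Fin.castSucc j', Fin.castSucc_lt_last j', rfl⟩
    have hsum : c (Fin.last (m+1)) * x (Fin.last (m+1))
        = - ∑ j : Fin (m+1), c j.castSucc * x j.castSucc := by
      rw [Fin.sum_univ_castSucc] at hc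
      linear_combination hc
    have hmem : c (Fin.last (m+1)) * x (Fin.last (m+1))
        ∈ Ideal.span (x '' {j | j < Fin.last (m+1)}) := by
      rw [hsetL, hsum]
      exact neg_mem (Ideal.sum_mem _ (fun j _ =>
        Ideal.mul_mem_left _ _ (Ideal.subset_span ⟨j, rfl⟩)))
    have hcL := hx (Fin.last (m+1)) _ hmem
    rw [hsetL] at hcL
    obtain ⟨d, hd0⟩ := Ideal.mem_span_range_iff_exists_fun.mp hcL
    have hd : ∑ i : Fin (m+1), d i * x i.castSucc = c (Fin.last (m+1)) := by
      simpa using hd0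
    have hreg' : RegMem (fun j : Fin (m+1) => x j.castSucc) := by
      intro k e he
      have hseteq : (fun j : Fin (m+1) => x j.castSucc) '' {j | j < k}
          = x '' {j | j < k.castSucc} := by
        ext b
        constructor
        · rintro ⟨j, hj, rfl⟩
          exact ⟨j.castSucc, Fin.castSucc_lt_castSucc_iff.mpr hj, rfl⟩
        · rintro ⟨j, hj, rfl⟩
          have hjne : j ≠ Fin.last (m+1) :=
            Fin.lt_last_iff_ne_last.mp (lt_of_lt_of_le hj (Fin.castSucc_lt_last k).le)
          obtain ⟨j', rfl⟩ := Fin.exists_castSucc_eq.mpr hjne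
          exact ⟨j', Fin.castSucc_lt_castSucc_iff.mp hj, rfl⟩
      rw [hseteq] at he ⊢
      exact hx k.castSucc e he
    have hc'sum : ∑ j : Fin (m+1),
        (c j.castSucc + d j * x (Fin.last (m+1))) * x j.castSucc = 0 := by
      have expand : ∑ j : Fin (m+1),
          (c j.castSucc + d j * x (Fin.last (m+1))) * x j.castSucc
          = ∑ j : Fin (m+1), c j.castSucc * x j.castSucc
            + (∑ j : Fin (m+1), d j * x j.castSucc) * x (Fin.last (m+1)) := by
        rw [Finset.sum_mul, ← Finset.sum_add_distrib]
        exact Finset.sum_congr rfl (fun j _ => by ring)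
      rw [expand, hd]
      linear_combination hsum
    obtain ⟨g, hg1, hg2, hg3⟩ := ih (fun j : Fin (m+1) => x j.castSucc) hreg'
      (fun j => c j.castSucc + d j * x (Fin.last (m+1))) hc'sum
    let h : Fin (m+2) → Fin (m+2) → A := fun j k =>
      if hj : j = Fin.last (m+1) then
        (if hk : k = Fin.last (m+1) then 0 else d (k.castPred hk))
      else if hk : k = Fin.last (m+1) then - d (j.castPred hj)
      else g (j.castPred hj) (k.castPred hk)
    have hLL : h (Fin.last (m+1)) (Fin.last (m+1)) = 0 := by simp [h]
    have hLc : ∀ k : Fin (m+1), h (Fin.last (m+1)) k.castSucc = d k := by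
      intro k; simp [h, hne k]
    have hcL2 : ∀ j : Fin (m+1), h j.castSucc (Fin.last (m+1)) = - d j := by
      intro j; simp [h, hne j]
    have hcc : ∀ j k : Fin (m+1), h j.castSucc k.castSucc = g j k := by
      intro j k; simp [h, hne j, hne k]
    refine ⟨h, ?_, ?_, ?_⟩
    · intro j k
      induction j using Fin.lastCases with
      | last =>
        induction k using Fin.lastCases with
        | last => rw [hLL]; simp
        | cast k => rw [hLc, hcL2]; simp
      | cast j =>
        induction k using Fin.lastCases with
        | last => rw [hcL2, hLc]
        | cast k => rw [hcc, hcc, hg1]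
    · intro j
      induction j using Fin.lastCases with
      | last => exact hLL
      | cast j => rw [hcc, hg2]
    · intro j
      induction j using Fin.lastCases with
      | last =>
        conv_rhs => rw [Fin.sum_univ_castSucc]
        rw [hLL]
        simp only [hLc]
        rw [← hd]; ring
      | cast j =>
        have hstep : c j.castSucc
            = (c j.castSucc + d j * x (Fin.last (m+1))) - d j * x (Fin.last (m+1)) := by ring
        rw [hstep, hg3 j]
        conv_rhs => rw [Fin.sum_univ_castSucc]
        simp only [hcc, hcL2]
        ring



private lemma span_lt_zero_eq_bot {A : Type*} [CommRing A] {m : ℕ} (x : Fin (m+1) → A) :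
    Ideal.span (x '' {j | j < 0}) = ⊥ := by
  have : ({j : Fin (m+1) | j < 0} : Set (Fin (m+1))) = ∅ := by
    ext j; simp [Fin.lt_iff_val_lt_val]
  rw [this, Set.image_empty, Ideal.span_empty]

private lemma nzd : ∀ (s : ℕ) (A : Type) [CommRing A] [IsNoetherianRing A] [IsLocalRing A]
    (x : Fin (s+1) → A), (∀ j, x j ∈ IsLocalRing.maximalIdeal A) → RegMem x →
    ∀ c : A, c * x (Fin.last s) = 0 → c = 0 := by
  intro s
  induction s with
  | zero =>
    intro A _ _ _ x hm hx c hc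
    have hc0 : c * x 0 = 0 := hc
    have := hx 0 c (by rw [span_lt_zero_eq_bot]; rw [hc0]; exact Ideal.zero_mem ⊥)
    rw [span_lt_zero_eq_bot] at this
    simpa using this
  | succ s ih =>
    intro A _ _ _ x hm hx c hc
    classical
    have hx0nzd : ∀ e : A, e * x 0 = 0 → e = 0 := by
      intro e he
      have := hx 0 e (by rw [span_lt_zero_eq_bot]; rw [he]; exact Ideal.zero_mem ⊥)
      rw [span_lt_zero_eq_bot] at this
      simpa using this
    set I0 : Ideal A := Ideal.span {x 0} with hI0
    have hI0le : I0 ≤ IsLocalRing.maximalIdeal A := by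
      rw [hI0, Ideal.span_le, Set.singleton_subset_iff]; exact hm 0
    have hI0top : I0 ≠ ⊤ :=
      fun h => (IsLocalRing.maximalIdeal.isMaximal A).ne_top (top_le_iff.mp (h ▸ hI0le))
    haveI : Nontrivial (A ⧸ I0) := Ideal.Quotient.nontrivial_iff.mpr hI0top
    haveI : IsLocalRing (A ⧸ I0) :=
      IsLocalRing.of_surjective' (Ideal.Quotient.mk I0) Ideal.Quotient.mk_surjective
    set y : Fin (s+1) → A ⧸ I0 := fun j => Ideal.Quotient.mk I0 (x j.succ) with hy
    have hym : ∀ j, y j ∈ IsLocalRing.maximalIdeal (A ⧸ I0) := by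
      intro j
      rw [IsLocalRing.mem_maximalIdeal, mem_nonunits_iff]
      intro hu
      obtain ⟨b', hb'⟩ := isUnit_iff_exists_inv.mp hu
      obtain ⟨b, rfl⟩ := Ideal.Quotient.mk_surjective b'
      have hmem : x j.succ * b - 1 ∈ I0 := by
        rw [← Ideal.Quotient.eq_zero_iff_mem, map_sub, map_mul, map_one]
        rw [hy] at hb'
        simp only at hb'
        rw [hb']; ring
      obtain ⟨t, ht⟩ := Ideal.mem_span_singleton'.mp (hI0 ▸ hmem)
      have h1 : (1 : A) ∈ IsLocalRing.maximalIdeal A := by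
        have hone : (1 : A) = x j.succ * b - t * x 0 := by rw [ht]; ring
        rw [hone]
        exact Ideal.sub_mem _ (Ideal.mul_mem_right _ _ (hm j.succ))
          (Ideal.mul_mem_left _ _ (hm 0))
      exact (IsLocalRing.maximalIdeal.isMaximal A).ne_top ((Ideal.eq_top_iff_one _).mpr h1)
    -- span comparison
    have hspan : ∀ k : Fin (s+1), Ideal.span (y '' {j | j < k})
        = Ideal.map (Ideal.Quotient.mk I0) (Ideal.span (x '' {j | j < k.succ})) := by
      intro k
      rw [Ideal.map_span]
      apply le_antisymm
      · rw [Ideal.span_le]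
        rintro b ⟨j, hj, rfl⟩
        exact Ideal.subset_span ⟨x j.succ, ⟨j.succ, Fin.succ_lt_succ_iff.mpr hj, rfl⟩, rfl⟩
      · rw [Ideal.span_le]
        rintro b ⟨u, ⟨t, htk, rfl⟩, rfl⟩
        induction t using Fin.cases with
        | zero =>
          have : Ideal.Quotient.mk I0 (x 0) = 0 :=
            Ideal.Quotient.eq_zero_iff_mem.mpr (Ideal.subset_span rfl)
          rw [this]
          exact Ideal.zero_mem _
        | succ j =>
          exact Ideal.subset_span ⟨j, Fin.succ_lt_succ_iff.mp htk, rfl⟩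
    have hregy : RegMem y := by
      intro k cb hcb
      obtain ⟨e, rfl⟩ := Ideal.Quotient.mk_surjective cb
      rw [hspan] at hcb ⊢
      have hx0mem : x 0 ∈ Ideal.span (x '' {j | j < k.succ}) :=
        Ideal.subset_span ⟨0, Fin.succ_pos k, rfl⟩
      have : e * x k.succ ∈ Ideal.span (x '' {j | j < k.succ}) := by
        have heq : Ideal.Quotient.mk I0 (e * x k.succ)
            ∈ Ideal.map (Ideal.Quotient.mk I0) (Ideal.span (x '' {j | j < k.succ})) := by
          rw [map_mul]; exact hcb
        obtain ⟨u, hu1, hu2⟩ := (Ideal.mem_map_iff_of_surjective _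
          Ideal.Quotient.mk_surjective).mp heq
        have : e * x k.succ - u ∈ I0 := by
          rw [← Ideal.Quotient.eq_zero_iff_mem, map_sub, hu2, sub_self]
        have hsub : e * x k.succ - u ∈ Ideal.span (x '' {j | j < k.succ}) := by
          obtain ⟨t, ht⟩ := Ideal.mem_span_singleton'.mp (hI0 ▸ this)
          rw [← ht]
          exact Ideal.mul_mem_left _ _ hx0mem
        have := Ideal.add_mem _ hsub hu1
        simpa using this
      exact Ideal.mem_map_of_mem _ (hx k.succ e this)
    -- the annihilator of x (last (s+1))
    set N : Submodule A A := LinearMap.ker (LinearMap.mulLeft A (x (Fin.last (s+1)))) with hN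
    have hmemN : ∀ e : A, e ∈ N ↔ x (Fin.last (s+1)) * e = 0 := by
      intro e; rw [hN, LinearMap.mem_ker, LinearMap.mulLeft_apply]
    have hNle : N ≤ (IsLocalRing.maximalIdeal A) • N := by
      intro e he
      rw [hmemN] at he
      have hql : Ideal.Quotient.mk I0 e * y (Fin.last s) = 0 := by
        rw [hy]
        simp only [Fin.succ_last]
        rw [← map_mul, mul_comm, he, map_zero]
      have := ih (A ⧸ I0) y hym hregy _ hql
      rw [Ideal.Quotient.eq_zero_iff_mem] at this
      obtain ⟨t, ht⟩ := Ideal.mem_span_singleton'.mp (hI0 ▸ this)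
      have htN : t ∈ N := by
        rw [hmemN]
        apply hx0nzd
        calc x (Fin.last (s+1)) * t * x 0 = x (Fin.last (s+1)) * (t * x 0) := by ring
        _ = 0 := by rw [ht]; exact he
      have : e = x 0 • t := by rw [smul_eq_mul, mul_comm, ht]
      rw [this]
      exact Submodule.smul_mem_smul (hm 0) htN
    have hNbot : N = ⊥ :=
      Submodule.eq_bot_of_le_smul_of_le_jacobson_bot (IsLocalRing.maximalIdeal A) N
        (IsNoetherian.noetherian N) hNle
        (le_of_eq (IsLocalRing.jacobson_eq_maximalIdeal ⊥ bot_ne_top).symm)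
    have : c ∈ N := by rw [hmemN, mul_comm]; exact hc
    rw [hNbot] at this
    simpa using this




private lemma regMem_of_isRegularSequence {A : Type*} [CommRing A] {r : ℕ}
    (a : Fin (r+1) → A)
    (h : IsRegularSequence ((List.finRange (r+1)).map a)) : RegMem a := by
  intro k c hc
  have hk : (k : ℕ) < (((List.finRange (r+1)).map a)).length := by
    simp [k.isLt]
  have hget : ((List.finRange (r+1)).map a).get ⟨k, hk⟩ = a k := by
    simp
  have hset : {b | b ∈ ((List.finRange (r+1)).map a).take (k : ℕ)} = a '' {j | j < k} := by
    ext b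
    simp only [Set.mem_setOf_eq, ← List.map_take, List.mem_map]
    constructor
    · rintro ⟨j, hj, rfl⟩
      refine ⟨j, ?_, rfl⟩
      obtain ⟨idx, hidx, hidx2⟩ := List.mem_iff_getElem.mp hj
      have hidx' : idx < (k : ℕ) := by
        rw [List.length_take] at hidx
        exact lt_of_lt_of_le hidx (min_le_left _ _)
      have hjv : (j : ℕ) = idx := by
        rw [← hidx2, List.getElem_take, List.getElem_finRange]
        simp
      show j < k
      rw [Fin.lt_iff_val_lt_val, hjv]
      exact hidx'
    · rintro ⟨j, hj, rfl⟩
      refine ⟨j, ?_, rfl⟩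
      apply List.mem_iff_getElem.mpr
      refine ⟨(j : ℕ), ?_, ?_⟩
      · rw [List.length_take, List.length_finRange]
        exact lt_min hj j.isLt
      · rw [List.getElem_take, List.getElem_finRange]
        ext
        simp
  have hspan : Ideal.span {b | b ∈ ((List.finRange (r+1)).map a).take (k : ℕ)}
      = Ideal.span (a '' {j | j < k}) := by rw [hset]
  have hmk := h (k : ℕ) hk (Ideal.Quotient.mk _ c) (by
    rw [hget, ← map_mul, Ideal.Quotient.eq_zero_iff_mem, hspan, mul_comm]
    exact hc)
  rw [Ideal.Quotient.eq_zero_iff_mem, hspan] at hmk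
  exact hmk




open MvPolynomial in
private lemma key_step {A : Type} [CommRing A] {r : ℕ} (a : Fin (r+1) → A) (i : Fin (r+1))
    (hkos : ∀ c : Fin (r+1) → A, (∑ j, c j * a j) = 0 →
      ∃ h : Fin (r+1) → Fin (r+1) → A,
        (∀ j k, h j k = - h k j) ∧ (∀ j, h j j = 0) ∧ (∀ j, c j = ∑ k, h j k * a k))
    (hai : ∀ c : A, c * a i = 0 → c = 0)
    (w : MvPolynomial {j : Fin (r+1) // j ≠ i} A)
    (hw : C (a i) * w ∈ Ideal.span (Set.range fun j : {j : Fin (r+1) // j ≠ i} =>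
        C (a i) * X j - C (a j.1))) :
    w ∈ Ideal.span (Set.range fun j : {j : Fin (r+1) // j ≠ i} =>
        C (a i) * X j - C (a j.1)) := by
  classical
  set f : {j : Fin (r+1) // j ≠ i} → MvPolynomial {j : Fin (r+1) // j ≠ i} A :=
    fun j => C (a i) * X j - C (a j.1) with hf
  obtain ⟨g, hg⟩ := Ideal.mem_span_range_iff_exists_fun.mp hw
  set q : MvPolynomial {j : Fin (r+1) // j ≠ i} A := (∑ j, g j * X j) - w with hq
  have hiden : ∑ j : {j : Fin (r+1) // j ≠ i}, C (a j.1) * g j = C (a i) * q := by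
    rw [hq, mul_sub, ← hg, Finset.mul_sum, ← Finset.sum_sub_distrib]
    exact Finset.sum_congr rfl (fun j _ => by rw [hf]; ring)
  have hco : ∀ m : ({j : Fin (r+1) // j ≠ i} →₀ ℕ),
      ∑ j : {j : Fin (r+1) // j ≠ i}, a j.1 * coeff m (g j) = a i * coeff m q := by
    intro m
    have := congrArg (coeff m) hiden
    simpa [coeff_sum, coeff_C_mul] using this
  set cvec : ({j : Fin (r+1) // j ≠ i} →₀ ℕ) → Fin (r+1) → A := fun m t =>
    if ht : t = i then - coeff m q else coeff m (g ⟨t, ht⟩) with hcvec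
  have hsyz : ∀ m, ∑ t, cvec m t * a t = 0 := by
    intro m
    rw [Fintype.sum_eq_add_sum_compl i,
      Finset.sum_subtype (p := fun t => t ≠ i) {i}ᶜ (fun t => by simp) (fun t => cvec m t * a t)]
    have h1 : cvec m i = - coeff m q := by rw [hcvec]; simp
    have h2 : ∀ t : {j : Fin (r+1) // j ≠ i}, cvec m t.1 = coeff m (g t) := by
      intro t; rw [hcvec]; simp [t.2]
    have h3 : ∑ t : {j : Fin (r+1) // j ≠ i}, cvec m t.1 * a t.1 = a i * coeff m q := by
      rw [← hco m]
      exact Finset.sum_congr rfl (fun t _ => by rw [h2 t]; ring)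
    rw [h1, h3]
    ring
  choose H hH1 hH2 hH3 using fun m => hkos (cvec m) (hsyz m)
  set T : Finset ({j : Fin (r+1) // j ≠ i} →₀ ℕ) :=
    Finset.univ.biUnion (fun j : {j : Fin (r+1) // j ≠ i} => (g j).support) with hT
  set hp : Fin (r+1) → Fin (r+1) → MvPolynomial {j : Fin (r+1) // j ≠ i} A := fun t k =>
    ∑ m ∈ T, monomial m (H m t k) with hhp
  have hpcoeff : ∀ t k m, coeff m (hp t k) = if m ∈ T then H m t k else 0 := by
    intro t k m
    rw [hhp]
    simp only [coeff_sum, coeff_monomial]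
    exact Finset.sum_ite_eq' T m _
  have hpanti : ∀ t k, hp t k = - hp k t := by
    intro t k
    apply MvPolynomial.ext
    intro m
    rw [coeff_neg, hpcoeff, hpcoeff]
    by_cases hm : m ∈ T <;> simp [hm, hH1 m t k]
  have hpdiag : ∀ t, hp t t = 0 := by
    intro t
    apply MvPolynomial.ext
    intro m
    rw [hpcoeff]
    by_cases hm : m ∈ T <;> simp [hm, hH2 m t]
  have hgj : ∀ j : {j : Fin (r+1) // j ≠ i}, g j = ∑ k : Fin (r+1), C (a k) * hp j.1 k := by
    intro j
    apply MvPolynomial.ext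
    intro m
    rw [coeff_sum]
    simp only [coeff_C_mul, hpcoeff]
    by_cases hm : m ∈ T
    · simp only [hm, if_true]
      have h4 := hH3 m j.1
      rw [hcvec] at h4
      simp only [dif_neg j.2] at h4
      rw [h4]
      exact Finset.sum_congr rfl (fun k _ => mul_comm _ _)
    · simp only [hm, if_false]
      have : m ∉ (g j).support := fun hmem =>
        hm (Finset.mem_biUnion.mpr ⟨j, Finset.mem_univ _, hmem⟩)
      rw [MvPolynomial.notMem_support_iff] at this
      simp [this]
  set W : MvPolynomial {j : Fin (r+1) // j ≠ i} A :=
    ∑ j : {j : Fin (r+1) // j ≠ i},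
      ((∑ k : {j : Fin (r+1) // j ≠ i}, hp j.1 k.1 * X k) + hp j.1 i) * f j with hW
  have hWI : W ∈ Ideal.span (Set.range f) :=
    Ideal.sum_mem _ (fun j _ => Ideal.mul_mem_left _ _ (Ideal.subset_span ⟨j, rfl⟩))
  have hDzero : ∑ j : {j : Fin (r+1) // j ≠ i}, ∑ k : {j : Fin (r+1) // j ≠ i},
      (hp j.1 k.1 * f k) * f j = 0 :=
    sum_antisym_zero _
      (fun j k => by rw [hpanti j.1 k.1]; ring)
      (fun j => by rw [hpdiag]; ring)
  have hsplit : ∀ j : {j : Fin (r+1) // j ≠ i}, g j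
      = C (a i) * hp j.1 i + ∑ k : {j : Fin (r+1) // j ≠ i}, C (a k.1) * hp j.1 k.1 := by
    intro j
    rw [hgj j, Fintype.sum_eq_add_sum_compl i,
      Finset.sum_subtype (p := fun t => t ≠ i) {i}ᶜ (fun t => by simp)
        (fun k => C (a k) * hp j.1 k)]
  have hinner : ∀ j : {j : Fin (r+1) // j ≠ i},
      ∑ k : {j : Fin (r+1) // j ≠ i}, C (a k.1) * hp j.1 k.1
      = C (a i) * (∑ k : {j : Fin (r+1) // j ≠ i}, hp j.1 k.1 * X k)
        - ∑ k : {j : Fin (r+1) // j ≠ i}, hp j.1 k.1 * f k := by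
    intro j
    rw [Finset.mul_sum, ← Finset.sum_sub_distrib]
    exact Finset.sum_congr rfl (fun k _ => by rw [hf]; ring)
  have hterm : ∀ j : {j : Fin (r+1) // j ≠ i}, g j * f j
      = C (a i) * (((∑ k : {j : Fin (r+1) // j ≠ i}, hp j.1 k.1 * X k) + hp j.1 i) * f j)
        - ∑ k : {j : Fin (r+1) // j ≠ i}, (hp j.1 k.1 * f k) * f j := by
    intro j
    rw [hsplit j, hinner j, ← Finset.sum_mul]
    ring
  have hmain : C (a i) * w = C (a i) * W := by
    rw [← hg, Finset.sum_congr rfl (fun j _ => hterm j), Finset.sum_sub_distrib, hDzero,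
      sub_zero, hW, Finset.mul_sum]
  have hzero : C (a i) * (w - W) = 0 := by rw [mul_sub, hmain, sub_self]
  have hwW : w - W = 0 := by
    apply MvPolynomial.ext
    intro m
    have := congrArg (coeff m) hzero
    rw [coeff_C_mul, coeff_zero] at this
    rw [coeff_zero]
    exact hai _ (by rw [mul_comm]; exact this)
  rw [sub_eq_zero] at hwW
  rw [hwW]
  exact hWI


open MvPolynomial in
theorem statement7 (A : Type) [CommRing A] [IsNoetherianRing A] [IsLocalRing A]
    (r : ℕ) (hr : 1 ≤ r) (a : Fin (r + 1) → A)
    (hreg : IsRegularSequence ((List.finRange (r + 1)).map a)) (i : Fin (r + 1))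
    (n : ℕ) (hn : 1 ≤ n)
    (z : MvPolynomial {j : Fin (r + 1) // j ≠ i} A ⧸
      Ideal.span (Set.range fun j : {j : Fin (r + 1) // j ≠ i} =>
        C (a i) * X j - C (a j.1)))
    (hz : Ideal.Quotient.mk
        (Ideal.span (Set.range fun j : {j : Fin (r + 1) // j ≠ i} =>
          C (a i) * X j - C (a j.1)))
        (C (a i) ^ n) * z = 0) :
    z = 0 := by
  classical
  obtain ⟨w, rfl⟩ := Ideal.Quotient.mk_surjective z
  have hzI : C (a i) ^ n * w ∈ Ideal.span (Set.range fun j : {j : Fin (r + 1) // j ≠ i} =>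
      C (a i) * X j - C (a j.1)) := by
    rw [← Ideal.Quotient.eq_zero_iff_mem, map_mul]
    exact hz
  rw [Ideal.Quotient.eq_zero_iff_mem]
  by_cases hu : ∃ j, IsUnit (a j)
  · -- some `a j` is a unit; then `a i` becomes a unit in the quotient
    obtain ⟨j, hj⟩ := hu
    set mk := Ideal.Quotient.mk (Ideal.span (Set.range fun j : {j : Fin (r + 1) // j ≠ i} =>
      C (a i) * X j - C (a j.1))) with hmkdef
    have hunit : IsUnit (mk (C (a i))) := by
      by_cases hji : j = i
      · exact hji ▸ ((hj.map (C : A →+* MvPolynomial {j : Fin (r + 1) // j ≠ i} A)).map mk)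
      · have hfm : (C (a i) * X (⟨j, hji⟩ : {j : Fin (r + 1) // j ≠ i}) - C (a j)) ∈
            Ideal.span (Set.range fun j : {j : Fin (r + 1) // j ≠ i} =>
              C (a i) * X j - C (a j.1)) :=
          Ideal.subset_span ⟨⟨j, hji⟩, rfl⟩
        have hmul : mk (C (a i)) * mk (X ⟨j, hji⟩) = mk (C (a j)) := by
          rw [hmkdef, ← map_mul]
          exact Ideal.Quotient.eq.mpr hfm
        have hone : IsUnit (mk (C (a j))) :=
          (hj.map (C : A →+* MvPolynomial {j : Fin (r + 1) // j ≠ i} A)).map mk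
        rw [← hmul] at hone
        exact isUnit_of_mul_isUnit_left hone
    have hun : IsUnit (mk (C (a i) ^ n)) := by
      rw [hmkdef, map_pow]
      rw [← hmkdef]
      exact hunit.pow n
    rw [← Ideal.Quotient.eq_zero_iff_mem]
    apply hun.mul_left_cancel
    rw [mul_zero]
    exact hz
  · -- all `a j` lie in the maximal ideal
    push_neg at hu
    have hmem : ∀ j, a j ∈ IsLocalRing.maximalIdeal A :=
      fun j => (IsLocalRing.mem_maximalIdeal _).mpr (mem_nonunits_iff.mpr (hu j))
    have hra : RegMem a := regMem_of_isRegularSequence a hreg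
    have hkos := koszul r a hra
    have hile : (i : ℕ) + 1 ≤ r + 1 := i.isLt
    set x : Fin ((i : ℕ) + 1) → A := fun t => a (t.castLE hile) with hxdef
    have hxm : ∀ t, x t ∈ IsLocalRing.maximalIdeal A := fun t => hmem _
    have hxreg : RegMem x := by
      intro k e he
      have hseteq : x '' {j | j < k} = a '' {j | j < k.castLE hile} := by
        ext b
        constructor
        · rintro ⟨t, ht, rfl⟩
          exact ⟨t.castLE hile, ht, rfl⟩
        · rintro ⟨t, ht, rfl⟩
          have htv : (t : ℕ) < (k : ℕ) := ht
          exact ⟨⟨(t : ℕ), lt_trans htv k.isLt⟩, htv, congrArg a (Fin.ext rfl)⟩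
      rw [hseteq] at he ⊢
      exact hra (k.castLE hile) e he
    have hlast : x (Fin.last (i : ℕ)) = a i := congrArg a (Fin.ext rfl)
    have hai : ∀ c : A, c * a i = 0 → c = 0 := by
      intro c hc
      exact nzd (i : ℕ) A x hxm hxreg c (by rw [hlast]; exact hc)
    have hpow : ∀ (nn : ℕ) (v : MvPolynomial {j : Fin (r + 1) // j ≠ i} A),
        C (a i) ^ nn * v ∈ Ideal.span (Set.range fun j : {j : Fin (r + 1) // j ≠ i} =>
          C (a i) * X j - C (a j.1)) →
        v ∈ Ideal.span (Set.range fun j : {j : Fin (r + 1) // j ≠ i} =>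
          C (a i) * X j - C (a j.1)) := by
      intro nn
      induction nn with
      | zero => intro v hv; simpa using hv
      | succ nn ih =>
        intro v hv
        apply ih
        apply key_step a i hkos hai
        rw [← mul_assoc, ← pow_succ']
        exact hv
    exact hpow n w hzI
end
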